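/- arXiv:1901.04861 — 11 statements merged into one kernel-verified Lean document; each statement's English description precedes it below -/
import Mathlib

section
/- Let φ : ℝ → ℝ be given by φ(θ) = (max{θ,0})², and for θ ∈ ℝ define φ′_θ : ℝ → ℝ by φ′_θ(h) = 2θh if θ > 0 and φ′_θ(h) = 0 if θ ≤ 0. Then for every θ ∈ ℝ, every sequence (t_n) with t_n ↓ 0, and every sequence (h_n) of reals with h_n → h ∈ ℝ: (a) (φ(θ + t_n h_n) − φ(θ))/t_n → φ′_θ(h); and (b) (φ(θ + t_n h_n) − φ(θ) − t_n φ′_θ(h_n))/t_n² converges to h² if θ > 0, to (max{h,0})² if θ = 0, and to 0 if θ < 0. (Thus φ is first order Hadamard directionally differentiable everywhere with first order derivative degenerate for θ ≤ 0, and second order Hadamard directionally differentiable with the stated second order derivative.) -/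
open Filter Topology

/-- Moment inequality functional `φ(θ) = (max{θ,0})²`: first order Hadamard directional
derivative `φ′_θ(h) = 2θh` for `θ > 0` and `0` for `θ ≤ 0`, and second order Hadamard
directional derivative `h²` for `θ > 0`, `(max{h,0})²` for `θ = 0`, and `0` for `θ < 0`. -/
theorem moment_inequality_first_and_second_order_hadamard
    (θ : ℝ) (t : ℕ → ℝ) (ht : ∀ n, 0 < t n) (htlim : Tendsto t atTop (𝓝 0))
    (hseq : ℕ → ℝ) (h : ℝ) (hconv : Tendsto hseq atTop (𝓝 h)) :
    Tendsto (fun n => ((max (θ + t n * hseq n) 0) ^ 2 - (max θ 0) ^ 2) / t n)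
        atTop (𝓝 (if 0 < θ then 2 * θ * h else 0)) ∧
    Tendsto (fun n =>
        ((max (θ + t n * hseq n) 0) ^ 2 - (max θ 0) ^ 2
          - t n * (if 0 < θ then 2 * θ * hseq n else 0)) / (t n) ^ 2)
        atTop (𝓝 (if 0 < θ then h ^ 2 else if θ = 0 then (max h 0) ^ 2 else 0)) := by
  have hts : Tendsto (fun n => t n * hseq n) atTop (𝓝 0) := by
    simpa using htlim.mul hconv
  rcases lt_trichotomy θ 0 with hθ | hθ | hθ
  · -- θ < 0
    have hev : ∀ᶠ n in atTop, θ + t n * hseq n < 0 :=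
      (hts.eventually (eventually_lt_nhds (by linarith : (0:ℝ) < -θ))).mono
        fun n hn => by linarith
    simp only [if_neg (not_lt.mpr hθ.le), if_neg hθ.ne]
    constructor
    · refine Tendsto.congr' ?_ (tendsto_const_nhds (x := (0:ℝ)))
      filter_upwards [hev] with n hn
      rw [max_eq_right hn.le, max_eq_right hθ.le]
      simp
    · refine Tendsto.congr' ?_ (tendsto_const_nhds (x := (0:ℝ)))
      filter_upwards [hev] with n hn
      rw [max_eq_right hn.le, max_eq_right hθ.le]
      simp
  · -- θ = 0
    subst hθ
    simp only [if_neg (lt_irrefl (0:ℝ)), if_pos rfl, zero_add]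
    have hmax : Tendsto (fun n => max (hseq n) 0) atTop (𝓝 (max h 0)) :=
      hconv.max tendsto_const_nhds
    constructor
    · have : Tendsto (fun n => t n * (max (hseq n) 0) ^ 2) atTop (𝓝 (0 * (max h 0)^2)) :=
        htlim.mul (hmax.pow 2)
      refine Tendsto.congr' ?_ (by simpa using this)
      filter_upwards [] with n
      have htn := ht n
      rw [max_eq_right (le_refl (0:ℝ)),
        show max (t n * hseq n) 0 = t n * max (hseq n) 0 from by
          rw [mul_max_of_nonneg _ _ htn.le, mul_zero]]
      field_simp
      ring
    · refine Tendsto.congr' ?_ (by simpa using hmax.pow 2)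
      filter_upwards [] with n
      have htn := ht n
      rw [max_eq_right (le_refl (0:ℝ))]
      rw [show max (t n * hseq n) 0 = t n * max (hseq n) 0 from by
        rw [mul_max_of_nonneg _ _ htn.le, mul_zero]]
      field_simp
      ring
  · -- θ > 0
    have hev : ∀ᶠ n in atTop, 0 < θ + t n * hseq n :=
      (hts.eventually (eventually_gt_nhds (by linarith : -θ < (0:ℝ)))).mono
        fun n hn => by linarith
    simp only [if_pos hθ]
    constructor
    · have : Tendsto (fun n => 2 * θ * hseq n + t n * (hseq n) ^ 2) atTop
          (𝓝 (2 * θ * h + 0 * h ^ 2)) :=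
        (hconv.const_mul _).add (htlim.mul (hconv.pow 2))
      refine Tendsto.congr' ?_ (by simpa using this)
      filter_upwards [hev] with n hn
      have htn := (ht n).ne'
      rw [max_eq_left hn.le, max_eq_left hθ.le]
      field_simp
      ring
    · refine Tendsto.congr' ?_ (hconv.pow 2)
      filter_upwards [hev] with n hn
      have htn := (ht n).ne'
      rw [max_eq_left hn.le, max_eq_left hθ.le]
      field_simp
      ring
end

section
/- (Lemma C.1(i), stochastic dominance, first order derivative.) Let w : ℝ → [0,∞) be Borel measurable with ∫_ℝ w(u) du < ∞ (Lebesgue integral). For a pair θ = (θ⁽¹⁾, θ⁽²⁾) of bounded Borel measurable functions ℝ → ℝ define φ(θ) = ∫_ℝ max{θ⁽¹⁾(u) − θ⁽²⁾(u), 0}² w(u) du and B₊(θ) = {u ∈ ℝ : θ⁽¹⁾(u) > θ⁽²⁾(u)}. Then for every such θ, every sequence t_n ↓ 0, and every sequence of pairs h_n = (h_n⁽¹⁾, h_n⁽²⁾) of bounded Borel measurable functions with ‖h_n⁽¹⁾ − h⁽¹⁾‖_∞ → 0 and ‖h_n⁽²⁾ − h⁽²⁾‖_∞ → 0 for a pair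 h = (h⁽¹⁾, h⁽²⁾) of bounded Borel measurable functions, one has (φ(θ + t_n h_n) − φ(θ))/t_n → 2 ∫_{B₊(θ)} (θ⁽¹⁾(u) − θ⁽²⁾(u)) (h⁽¹⁾(u) − h⁽²⁾(u)) w(u) du. -/
open Filter Topology MeasureTheory

lemma sq_max_sub_le (x y : ℝ) :
    |max x 0 ^ 2 - max y 0 ^ 2| ≤ (|x| + |y|) * |x - y| := by
  have h1 : |max x 0 - max y 0| ≤ |x - y| := abs_max_sub_max_le_abs x y 0
  have hx : max x 0 ≤ |x| := max_le (le_abs_self x) (abs_nonneg x)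
  have hy : max y 0 ≤ |y| := max_le (le_abs_self y) (abs_nonneg y)
  have hx0 : (0 : ℝ) ≤ max x 0 := le_max_right x 0
  have hy0 : (0 : ℝ) ≤ max y 0 := le_max_right y 0
  have key : max x 0 ^ 2 - max y 0 ^ 2 = (max x 0 - max y 0) * (max x 0 + max y 0) := by
    ring
  rw [key, abs_mul]
  have h2 : |max x 0 + max y 0| ≤ |x| + |y| := by
    rw [abs_of_nonneg (by linarith)]; linarith
  calc |max x 0 - max y 0| * |max x 0 + max y 0|
      ≤ |x - y| * (|x| + |y|) :=
        mul_le_mul h1 h2 (abs_nonneg _) (abs_nonneg _)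
    _ = (|x| + |y|) * |x - y| := mul_comm _ _

lemma pointwise_quot (a binf : ℝ) (t : ℕ → ℝ) (ht : ∀ n, 0 < t n)
    (htlim : Tendsto t atTop (𝓝 0)) (b : ℕ → ℝ) (hb : Tendsto b atTop (𝓝 binf)) :
    Tendsto (fun n => (max (a + t n * b n) 0 ^ 2 - max a 0 ^ 2) / t n) atTop
      (𝓝 (if 0 < a then 2 * a * binf else 0)) := by
  have htb : Tendsto (fun n => t n * b n) atTop (𝓝 0) := by
    have := htlim.mul hb; simpa using this
  have htbabs : Tendsto (fun n => |t n * b n|) atTop (𝓝 0) := by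
    simpa using htb.abs
  rcases lt_trichotomy a 0 with ha | ha | ha
  · rw [if_neg (by linarith)]
    have hev : ∀ᶠ n in atTop, |t n * b n| < -a :=
      htbabs.eventually_lt_const (by linarith)
    have heq : (fun n => (max (a + t n * b n) 0 ^ 2 - max a 0 ^ 2) / t n)
        =ᶠ[atTop] fun _ => (0:ℝ) := by
      filter_upwards [hev] with n hn
      have h1 : a + t n * b n ≤ 0 := by
        have := abs_lt.mp hn; linarith [this.1, this.2]
      rw [max_eq_right h1, max_eq_right ha.le]
      simp
    exact Tendsto.congr' heq.symm tendsto_const_nhds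
  · subst ha
    rw [if_neg (lt_irrefl 0)]
    have heq : ∀ n,
        (max ((0:ℝ) + t n * b n) 0 ^ 2 - max (0:ℝ) 0 ^ 2) / t n
          = t n * max (b n) 0 ^ 2 := by
      intro n
      have hmax : max (t n * b n) 0 = t n * max (b n) 0 := by
        rw [mul_max_of_nonneg _ _ (ht n).le, mul_zero]
      have htn : t n ≠ 0 := (ht n).ne'
      rw [zero_add, hmax, max_self]
      field_simp
      ring
    have hlim : Tendsto (fun n => t n * max (b n) 0 ^ 2) atTop (𝓝 0) := by
      have hmb : Tendsto (fun n => max (b n) 0 ^ 2) atTop (𝓝 (max binf 0 ^ 2)) :=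
        ((hb.max tendsto_const_nhds).pow 2)
      have := htlim.mul hmb
      simpa using this
    exact (Tendsto.congr (fun n => (heq n).symm) hlim)
  · rw [if_pos ha]
    have hev : ∀ᶠ n in atTop, |t n * b n| < a :=
      htbabs.eventually_lt_const ha
    have heq : (fun n => (max (a + t n * b n) 0 ^ 2 - max a 0 ^ 2) / t n)
        =ᶠ[atTop] fun n => 2 * a * b n + t n * b n ^ 2 := by
      filter_upwards [hev] with n hn
      have h1 : 0 ≤ a + t n * b n := by
        have := abs_lt.mp hn; linarith [this.1, this.2]
      rw [max_eq_left h1, max_eq_left ha.le]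
      have htn : t n ≠ 0 := (ht n).ne'
      field_simp
      ring
    have hlim : Tendsto (fun n => 2 * a * b n + t n * b n ^ 2) atTop
        (𝓝 (2 * a * binf)) := by
      have h2 : Tendsto (fun n => 2 * a * b n) atTop (𝓝 (2 * a * binf)) :=
        hb.const_mul (2 * a)
      have h3 : Tendsto (fun n => t n * b n ^ 2) atTop (𝓝 0) := by
        have := htlim.mul (hb.pow 2); simpa using this
      have := h2.add h3
      simpa using this
    exact Tendsto.congr' heq.symm hlim

/-- Lemma C.1(i): first order Hadamard derivative of the stochastic dominance functional
`φ(θ) = ∫ max{θ⁽¹⁾ − θ⁽²⁾, 0}² w du`, namely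
`(φ(θ + t_n h_n) − φ(θ))/t_n → 2∫_{B₊(θ)} (θ⁽¹⁾ − θ⁽²⁾)(h⁽¹⁾ − h⁽²⁾) w du`. -/
theorem stochastic_dominance_first_order_hadamard
    (w : ℝ → ℝ) (hw0 : ∀ u, 0 ≤ w u) (hwm : Measurable w) (hwint : Integrable w)
    (θ1 θ2 : ℝ → ℝ) (hθ1m : Measurable θ1) (hθ1b : ∃ C, ∀ u, |θ1 u| ≤ C)
    (hθ2m : Measurable θ2) (hθ2b : ∃ C, ∀ u, |θ2 u| ≤ C)
    (t : ℕ → ℝ) (ht : ∀ n, 0 < t n) (htlim : Tendsto t atTop (𝓝 0))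
    (h1 h2 : ℕ → ℝ → ℝ) (hl1 hl2 : ℝ → ℝ)
    (hh1m : ∀ n, Measurable (h1 n)) (hh1b : ∀ n, ∃ C, ∀ u, |h1 n u| ≤ C)
    (hh2m : ∀ n, Measurable (h2 n)) (hh2b : ∀ n, ∃ C, ∀ u, |h2 n u| ≤ C)
    (hl1m : Measurable hl1) (hl1b : ∃ C, ∀ u, |hl1 u| ≤ C)
    (hl2m : Measurable hl2) (hl2b : ∃ C, ∀ u, |hl2 u| ≤ C)
    (hconv1 : ∀ ε > (0 : ℝ), ∀ᶠ n in atTop, ∀ u, |h1 n u - hl1 u| ≤ ε)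
    (hconv2 : ∀ ε > (0 : ℝ), ∀ᶠ n in atTop, ∀ u, |h2 n u - hl2 u| ≤ ε) :
    Tendsto (fun n =>
        ((∫ u, (max ((θ1 u + t n * h1 n u) - (θ2 u + t n * h2 n u)) 0) ^ 2 * w u)
          - ∫ u, (max (θ1 u - θ2 u) 0) ^ 2 * w u) / t n)
      atTop
      (𝓝 (2 * ∫ u in {u | θ2 u < θ1 u}, (θ1 u - θ2 u) * (hl1 u - hl2 u) * w u)) := by
  obtain ⟨C1, hC1⟩ := hθ1b
  obtain ⟨C2, hC2⟩ := hθ2b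
  obtain ⟨D1, hD1⟩ := hl1b
  obtain ⟨D2, hD2⟩ := hl2b
  set Cθ : ℝ := C1 + C2 with hCθ
  have hΔb : ∀ u, |θ1 u - θ2 u| ≤ Cθ := by
    intro u
    calc |θ1 u - θ2 u| ≤ |θ1 u| + |θ2 u| := _root_.abs_sub _ _
      _ ≤ Cθ := add_le_add (hC1 u) (hC2 u)
  set M : ℝ := D1 + D2 + 2 with hM
  have hginfb : ∀ u, |hl1 u - hl2 u| ≤ D1 + D2 := by
    intro u
    calc |hl1 u - hl2 u| ≤ |hl1 u| + |hl2 u| := _root_.abs_sub _ _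
      _ ≤ D1 + D2 := add_le_add (hD1 u) (hD2 u)
  -- eventual bounds
  have hev : ∀ᶠ n in atTop, (∀ u, |h1 n u - h2 n u| ≤ M) ∧ t n < 1 := by
    have e1 := hconv1 1 one_pos
    have e2 := hconv2 1 one_pos
    have e3 : ∀ᶠ n in atTop, t n < 1 :=
      htlim.eventually_lt_const one_pos
    filter_upwards [e1, e2, e3] with n hn1 hn2 hn3
    refine ⟨fun u => ?_, hn3⟩
    have : h1 n u - h2 n u = (h1 n u - hl1 u) - (h2 n u - hl2 u) + (hl1 u - hl2 u) := by
      ring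
    rw [this]
    calc |(h1 n u - hl1 u) - (h2 n u - hl2 u) + (hl1 u - hl2 u)|
        ≤ |(h1 n u - hl1 u) - (h2 n u - hl2 u)| + |hl1 u - hl2 u| := abs_add_le _ _
      _ ≤ (|h1 n u - hl1 u| + |h2 n u - hl2 u|) + |hl1 u - hl2 u| :=
          add_le_add (_root_.abs_sub _ _) le_rfl
      _ ≤ (1 + 1) + (D1 + D2) := add_le_add (add_le_add (hn1 u) (hn2 u)) (hginfb u)
      _ = M := by rw [hM]; ring
  obtain ⟨N, hN⟩ := eventually_atTop.mp hev
  rw [← tendsto_add_atTop_iff_nat N]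
  -- simplify the inner expression
  have hrw : ∀ n u, (θ1 u + t n * h1 n u) - (θ2 u + t n * h2 n u)
      = (θ1 u - θ2 u) + t n * (h1 n u - h2 n u) := by intro n u; ring
  simp only [hrw]
  -- the quotient sequence and the limit function
  set Δ : ℝ → ℝ := fun u => θ1 u - θ2 u with hΔ
  set q : ℕ → ℝ → ℝ := fun n u =>
    (max (Δ u + t (n + N) * (h1 (n + N) u - h2 (n + N) u)) 0 ^ 2 * w u
      - max (Δ u) 0 ^ 2 * w u) / t (n + N) with hq
  set Flim : ℝ → ℝ := fun u =>
    (if 0 < Δ u then 2 * Δ u * (hl1 u - hl2 u) else 0) * w u with hFlim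
  -- measurability
  have hΔm : Measurable Δ := hθ1m.sub hθ2m
  have hAm : ∀ n, Measurable fun u =>
      max (Δ u + t (n + N) * (h1 (n + N) u - h2 (n + N) u)) 0 ^ 2 * w u := by
    intro n
    exact (((hΔm.add (((hh1m _).sub (hh2m _)).const_mul _)).max
      measurable_const).pow_const 2).mul hwm
  have hBm : Measurable fun u => max (Δ u) 0 ^ 2 * w u :=
    ((hΔm.max measurable_const).pow_const 2).mul hwm
  -- integrability of the two integrands
  have hAint : ∀ n, Integrable fun u =>
      max (Δ u + t (n + N) * (h1 (n + N) u - h2 (n + N) u)) 0 ^ 2 * w u := by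
    intro n
    refine Integrable.mono' (hwint.const_mul ((Cθ + M) ^ 2))
      (hAm n).aestronglyMeasurable (ae_of_all _ fun u => ?_)
    obtain ⟨hb, ht1⟩ := hN (n + N) (Nat.le_add_left N n)
    have hx : |Δ u + t (n + N) * (h1 (n + N) u - h2 (n + N) u)| ≤ Cθ + M := by
      have h1' : |t (n + N) * (h1 (n + N) u - h2 (n + N) u)| ≤ M := by
        rw [abs_mul, abs_of_pos (ht (n + N))]
        have hMnn : (0 : ℝ) ≤ M := le_trans (abs_nonneg _) (hb u)
        calc t (n + N) * |h1 (n + N) u - h2 (n + N) u|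
            ≤ 1 * M := mul_le_mul ht1.le (hb u) (abs_nonneg _) (by linarith)
          _ = M := one_mul M
      calc |Δ u + t (n + N) * (h1 (n + N) u - h2 (n + N) u)|
          ≤ |Δ u| + |t (n + N) * (h1 (n + N) u - h2 (n + N) u)| := abs_add_le _ _
        _ ≤ Cθ + M := add_le_add (hΔb u) h1'
    have hmx : |max (Δ u + t (n + N) * (h1 (n + N) u - h2 (n + N) u)) 0| ≤ Cθ + M := by
      rw [abs_of_nonneg (le_max_right _ _)]
      exact le_trans (max_le (le_abs_self _) (abs_nonneg _)) hx
    rw [Real.norm_eq_abs, abs_mul, abs_of_nonneg (hw0 u), abs_pow]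
    have := pow_le_pow_left₀ (abs_nonneg _) hmx 2
    exact mul_le_mul_of_nonneg_right this (hw0 u)
  have hBint : Integrable fun u => max (Δ u) 0 ^ 2 * w u := by
    refine Integrable.mono' (hwint.const_mul (Cθ ^ 2))
      hBm.aestronglyMeasurable (ae_of_all _ fun u => ?_)
    have hmx : |max (Δ u) 0| ≤ Cθ := by
      rw [abs_of_nonneg (le_max_right _ _)]
      exact le_trans (max_le (le_abs_self _) (abs_nonneg _)) (hΔb u)
    rw [Real.norm_eq_abs, abs_mul, abs_of_nonneg (hw0 u), abs_pow]
    exact mul_le_mul_of_nonneg_right (pow_le_pow_left₀ (abs_nonneg _) hmx 2) (hw0 u)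
  -- the sequence equals ∫ q n
  have hqint : ∀ n, (∫ u, q n u)
      = ((∫ u, max (Δ u + t (n + N) * (h1 (n + N) u - h2 (n + N) u)) 0 ^ 2 * w u)
        - ∫ u, max (Δ u) 0 ^ 2 * w u) / t (n + N) := by
    intro n
    rw [hq]
    simp only
    rw [integral_div, integral_sub (hAint n) hBint]
  -- DCT
  have hDCT : Tendsto (fun n => ∫ u, q n u) atTop (𝓝 (∫ u, Flim u)) := by
    apply tendsto_integral_of_dominated_convergence (fun u => (2 * Cθ + M) * M * w u)
    · intro n
      exact (((hAm n).sub hBm).div_const _).aestronglyMeasurable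
    · exact hwint.const_mul _
    · intro n
      refine ae_of_all _ fun u => ?_
      obtain ⟨hb, ht1⟩ := hN (n + N) (Nat.le_add_left N n)
      have htn := ht (n + N)
      set x := Δ u + t (n + N) * (h1 (n + N) u - h2 (n + N) u) with hx
      have hkey : |max x 0 ^ 2 - max (Δ u) 0 ^ 2| ≤ (|x| + |Δ u|) * |x - Δ u| :=
        sq_max_sub_le x (Δ u)
      have hxd : |x - Δ u| ≤ t (n + N) * M := by
        rw [hx]
        have : Δ u + t (n + N) * (h1 (n + N) u - h2 (n + N) u) - Δ u
            = t (n + N) * (h1 (n + N) u - h2 (n + N) u) := by ring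
        rw [this, abs_mul, abs_of_pos htn]
        exact mul_le_mul_of_nonneg_left (hb u) htn.le
      have hMnn : (0 : ℝ) ≤ M := le_trans (abs_nonneg _) (hb u)
      have hxb : |x| ≤ Cθ + M := by
        rw [hx]
        calc |Δ u + t (n + N) * (h1 (n + N) u - h2 (n + N) u)|
            ≤ |Δ u| + |t (n + N) * (h1 (n + N) u - h2 (n + N) u)| := abs_add_le _ _
          _ ≤ Cθ + M := by
              refine add_le_add (hΔb u) ?_
              rw [abs_mul, abs_of_pos htn]
              calc t (n + N) * |h1 (n + N) u - h2 (n + N) u|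
                  ≤ 1 * M := mul_le_mul ht1.le (hb u) (abs_nonneg _) (by linarith)
                _ = M := one_mul M
      have hΔu := hΔb u
      have hCθnn : (0 : ℝ) ≤ Cθ := le_trans (abs_nonneg _) (hΔb u)
      have hnum : |max x 0 ^ 2 - max (Δ u) 0 ^ 2| ≤ (2 * Cθ + M) * M * t (n + N) := by
        calc |max x 0 ^ 2 - max (Δ u) 0 ^ 2|
            ≤ (|x| + |Δ u|) * |x - Δ u| := hkey
          _ ≤ ((Cθ + M) + Cθ) * (t (n + N) * M) := by
              apply mul_le_mul (add_le_add hxb hΔu) hxd (abs_nonneg _)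
              positivity
          _ = (2 * Cθ + M) * M * t (n + N) := by ring
      rw [hq]
      simp only
      rw [Real.norm_eq_abs]
      have heq1 : (max x 0 ^ 2 * w u - max (Δ u) 0 ^ 2 * w u) / t (n + N)
          = (max x 0 ^ 2 - max (Δ u) 0 ^ 2) * w u / t (n + N) := by ring
      rw [heq1, abs_div, abs_of_pos htn, abs_mul, abs_of_nonneg (hw0 u),
        div_le_iff₀ htn]
      calc |max x 0 ^ 2 - max (Δ u) 0 ^ 2| * w u
          ≤ ((2 * Cθ + M) * M * t (n + N)) * w u :=
            mul_le_mul_of_nonneg_right hnum (hw0 u)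
        _ = (2 * Cθ + M) * M * w u * t (n + N) := by ring
    · refine ae_of_all _ fun u => ?_
      have hbconv : Tendsto (fun n => h1 (n + N) u - h2 (n + N) u) atTop
          (𝓝 (hl1 u - hl2 u)) := by
        rw [Metric.tendsto_atTop]
        intro ε hε
        have e1 := (tendsto_add_atTop_nat N).eventually (hconv1 (ε / 4) (by linarith))
        have e2 := (tendsto_add_atTop_nat N).eventually (hconv2 (ε / 4) (by linarith))
        obtain ⟨N', hN'⟩ := eventually_atTop.mp (e1.and e2)
        refine ⟨N', fun n hn => ?_⟩
        obtain ⟨ha, hb⟩ := hN' n hn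
        rw [Real.dist_eq]
        have : h1 (n + N) u - h2 (n + N) u - (hl1 u - hl2 u)
            = (h1 (n + N) u - hl1 u) - (h2 (n + N) u - hl2 u) := by ring
        rw [this]
        calc |(h1 (n + N) u - hl1 u) - (h2 (n + N) u - hl2 u)|
            ≤ |h1 (n + N) u - hl1 u| + |h2 (n + N) u - hl2 u| := _root_.abs_sub _ _
          _ ≤ ε / 4 + ε / 4 := add_le_add (ha u) (hb u)
          _ < ε := by linarith
      have hkey := pointwise_quot (Δ u) (hl1 u - hl2 u) (fun n => t (n + N))
        (fun n => ht (n + N)) (htlim.comp (tendsto_add_atTop_nat N))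
        (fun n => h1 (n + N) u - h2 (n + N) u) hbconv
      have := hkey.mul_const (w u)
      refine this.congr fun n => ?_
      rw [hq]
      simp only
      ring
  -- identify the limit value
  have hlimval : (2 : ℝ) * ∫ u in {u | θ2 u < θ1 u}, (θ1 u - θ2 u) * (hl1 u - hl2 u) * w u
      = ∫ u, Flim u := by
    have hs : MeasurableSet {u : ℝ | θ2 u < θ1 u} := measurableSet_lt hθ2m hθ1m
    rw [← integral_const_mul, ← integral_indicator hs]
    congr 1
    funext u
    rw [hFlim]
    simp only [Set.indicator_apply, Set.mem_setOf_eq, hΔ]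
    by_cases hu : θ2 u < θ1 u
    · rw [if_pos hu, if_pos (sub_pos.mpr hu)]
      ring
    · rw [if_neg hu, if_neg (fun hc => hu (sub_pos.mp hc))]
      simp
  rw [hlimval]
  exact hDCT.congr fun n => hqint n
end

section
/- (Lemma C.1(ii), stochastic dominance, second order derivative.) Let w : ℝ → [0,∞) be Borel measurable with ∫_ℝ w(u) du < ∞ (Lebesgue integral). For a pair θ = (θ⁽¹⁾, θ⁽²⁾) of bounded Borel measurable functions ℝ → ℝ define φ(θ) = ∫_ℝ max{θ⁽¹⁾(u) − θ⁽²⁾(u), 0}² w(u) du, B₊(θ) = {u : θ⁽¹⁾(u) > θ⁽²⁾(u)}, and B₀(θ) = {u : θ⁽¹⁾(u) = θ⁽²⁾(u)}. Then for every such θ, every sequence t_n ↓ 0, and every sequence of pairs h_n = (h_n⁽¹⁾, h_n⁽²⁾) of bounded Borel measurable functions converging in supremum norm (coordinatewise) to a pair h = (h⁽¹⁾, h⁽²⁾) of bounded Borel measurable functions, the quantity (φ(θ + t_n h_n) − φ(θ) − 2 t_n ∫_{B₊(θ)} (θ⁽¹⁾ − θ⁽²⁾)(h_n⁽¹⁾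 − h_n⁽²⁾) w du)/t_n² converges to ∫_{B₀(θ)} max{h⁽¹⁾(u) − h⁽²⁾(u), 0}² w(u) du + ∫_{B₊(θ)} (h⁽¹⁾(u) − h⁽²⁾(u))² w(u) du. -/
open Filter Topology MeasureTheory

noncomputable def Fq (a b t : ℝ) : ℝ :=
  (max (a + t * b) 0 ^ 2 - max a 0 ^ 2 - 2 * t * (if 0 < a then a * b else 0)) / t ^ 2

lemma key_bound (a b t : ℝ) (ht : 0 < t) :
    |max (a + t * b) 0 ^ 2 - max a 0 ^ 2 - 2 * t * (if 0 < a then a * b else 0)|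
      ≤ t ^ 2 * b ^ 2 := by
  rcases le_or_gt a 0 with ha | ha
  · rw [if_neg (not_lt.mpr ha), max_eq_right ha]
    rcases le_or_gt (a + t * b) 0 with h2 | h2
    · rw [max_eq_right h2]
      simp only [ne_eq, OfNat.ofNat_ne_zero, not_false_eq_true, zero_pow, sub_zero, mul_zero,
        abs_zero]
      positivity
    · rw [max_eq_left h2.le, abs_le]
      constructor <;> nlinarith [sq_nonneg (a + t * b), sq_nonneg b, mul_pos ht ht]
  · rw [if_pos ha, max_eq_left ha.le]
    rcases le_or_gt 0 (a + t * b) with h2 | h2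
    · rw [max_eq_left h2]
      have : (a + t * b) ^ 2 - a ^ 2 - 2 * t * (a * b) = t ^ 2 * b ^ 2 := by ring
      rw [this, abs_of_nonneg (by positivity)]
    · rw [max_eq_right h2.le, abs_le]
      constructor <;> nlinarith [sq_nonneg (a + t * b), sq_nonneg (a + 2 * t * b)]

lemma Fq_bound (a b t : ℝ) (ht : 0 < t) : |Fq a b t| ≤ b ^ 2 := by
  unfold Fq
  rw [abs_div, abs_of_pos (pow_pos ht 2), div_le_iff₀ (pow_pos ht 2)]
  calc |max (a + t * b) 0 ^ 2 - max a 0 ^ 2 - 2 * t * (if 0 < a then a * b else 0)|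
      ≤ t ^ 2 * b ^ 2 := key_bound a b t ht
    _ = b ^ 2 * t ^ 2 := by ring

lemma Fq_pos_eq (a b t : ℝ) (ht : 0 < t) (ha : 0 < a) (h : 0 < a + t * b) :
    Fq a b t = b ^ 2 := by
  unfold Fq
  rw [if_pos ha, max_eq_left h.le, max_eq_left ha.le]
  field_simp
  ring

lemma Fq_zero_eq (b t : ℝ) (ht : 0 < t) : Fq 0 b t = max b 0 ^ 2 := by
  unfold Fq
  rw [if_neg (lt_irrefl 0), zero_add]
  have h : max (t * b) 0 = t * max b 0 := by
    rw [← mul_zero t, ← mul_max_of_nonneg b 0 ht.le, mul_zero]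
  rw [h, max_self]
  field_simp
  ring

lemma Fq_neg_eq (a b t : ℝ) (ha : a < 0) (h : a + t * b < 0) : Fq a b t = 0 := by
  unfold Fq
  rw [if_neg (not_lt.mpr ha.le), max_eq_right h.le, max_eq_right ha.le]
  simp

lemma intmul {w : ℝ → ℝ} (hw : Integrable w) {f : ℝ → ℝ} (hf : Measurable f) {C : ℝ}
    (hC : ∀ u, |f u| ≤ C) : Integrable (fun u => f u * w u) :=
  hw.bdd_mul (c := C) hf.aestronglyMeasurable (Eventually.of_forall fun u => by simpa using hC u)

lemma maxsq_abs_le {x M : ℝ} (h : |x| ≤ M) : |max x 0 ^ 2| ≤ M ^ 2 := by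
  have h0 : |max x 0| ≤ M := by
    rcases le_total x 0 with hx | hx
    · rw [max_eq_right hx]; simpa using (abs_nonneg x).trans h
    · rwa [max_eq_left hx, abs_of_nonneg hx, ← abs_of_nonneg hx]
  calc |max x 0 ^ 2| = |max x 0| ^ 2 := by rw [abs_pow]
    _ ≤ M ^ 2 := pow_le_pow_left₀ (abs_nonneg _) h0 2

/-- Lemma C.1(ii): second order Hadamard directional derivative of the stochastic dominance
functional `φ(θ) = ∫ max{θ⁽¹⁾ − θ⁽²⁾, 0}² w du`, namely
`(φ(θ + t_n h_n) − φ(θ) − t_n φ′_θ(h_n))/t_n² →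
  ∫_{B₀(θ)} max{h⁽¹⁾ − h⁽²⁾, 0}² w du + ∫_{B₊(θ)} (h⁽¹⁾ − h⁽²⁾)² w du`. -/
theorem stochastic_dominance_second_order_hadamard
    (w : ℝ → ℝ) (hw0 : ∀ u, 0 ≤ w u) (hwm : Measurable w) (hwint : Integrable w)
    (θ1 θ2 : ℝ → ℝ) (hθ1m : Measurable θ1) (hθ1b : ∃ C, ∀ u, |θ1 u| ≤ C)
    (hθ2m : Measurable θ2) (hθ2b : ∃ C, ∀ u, |θ2 u| ≤ C)
    (t : ℕ → ℝ) (ht : ∀ n, 0 < t n) (htlim : Tendsto t atTop (𝓝 0))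
    (h1 h2 : ℕ → ℝ → ℝ) (hl1 hl2 : ℝ → ℝ)
    (hh1m : ∀ n, Measurable (h1 n)) (hh1b : ∀ n, ∃ C, ∀ u, |h1 n u| ≤ C)
    (hh2m : ∀ n, Measurable (h2 n)) (hh2b : ∀ n, ∃ C, ∀ u, |h2 n u| ≤ C)
    (hl1m : Measurable hl1) (hl1b : ∃ C, ∀ u, |hl1 u| ≤ C)
    (hl2m : Measurable hl2) (hl2b : ∃ C, ∀ u, |hl2 u| ≤ C)
    (hconv1 : ∀ ε > (0 : ℝ), ∀ᶠ n in atTop, ∀ u, |h1 n u - hl1 u| ≤ ε)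
    (hconv2 : ∀ ε > (0 : ℝ), ∀ᶠ n in atTop, ∀ u, |h2 n u - hl2 u| ≤ ε) :
    Tendsto (fun n =>
        ((∫ u, (max ((θ1 u + t n * h1 n u) - (θ2 u + t n * h2 n u)) 0) ^ 2 * w u)
          - (∫ u, (max (θ1 u - θ2 u) 0) ^ 2 * w u)
          - 2 * t n * ∫ u in {u | θ2 u < θ1 u},
              (θ1 u - θ2 u) * (h1 n u - h2 n u) * w u) / (t n) ^ 2)
      atTop
      (𝓝 ((∫ u in {u | θ1 u = θ2 u}, (max (hl1 u - hl2 u) 0) ^ 2 * w u)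
            + ∫ u in {u | θ2 u < θ1 u}, (hl1 u - hl2 u) ^ 2 * w u)) := by
  classical
  obtain ⟨C1, hC1⟩ := hθ1b
  obtain ⟨C2, hC2⟩ := hθ2b
  obtain ⟨Cl1, hCl1⟩ := hl1b
  obtain ⟨Cl2, hCl2⟩ := hl2b
  have hS : MeasurableSet {u : ℝ | θ2 u < θ1 u} := measurableSet_lt hθ2m hθ1m
  have hZ : MeasurableSet {u : ℝ | θ1 u = θ2 u} := measurableSet_eq_fun hθ1m hθ2m
  have hgm : Measurable (fun u => θ1 u - θ2 u) := hθ1m.sub hθ2m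
  have hkm : ∀ n, Measurable (fun u => h1 n u - h2 n u) := fun n => (hh1m n).sub (hh2m n)
  have hklm : Measurable (fun u => hl1 u - hl2 u) := hl1m.sub hl2m
  -- pointwise convergence of h1 n - h2 n
  have hk : ∀ u, Tendsto (fun n => h1 n u - h2 n u) atTop (𝓝 (hl1 u - hl2 u)) := by
    intro u
    have t1 : Tendsto (fun n => h1 n u) atTop (𝓝 (hl1 u)) := by
      rw [Metric.tendsto_atTop]
      intro ε hε
      obtain ⟨N0, hN0⟩ := eventually_atTop.1 (hconv1 (ε / 2) (by linarith))
      exact ⟨N0, fun n hn => by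
        have := hN0 n hn u
        rw [Real.dist_eq]; linarith⟩
    have t2 : Tendsto (fun n => h2 n u) atTop (𝓝 (hl2 u)) := by
      rw [Metric.tendsto_atTop]
      intro ε hε
      obtain ⟨N0, hN0⟩ := eventually_atTop.1 (hconv2 (ε / 2) (by linarith))
      exact ⟨N0, fun n hn => by
        have := hN0 n hn u
        rw [Real.dist_eq]; linarith⟩
    exact t1.sub t2
  -- the combined integrand
  set F : ℕ → ℝ → ℝ :=
    fun n u => Fq (θ1 u - θ2 u) (h1 n u - h2 n u) (t n) * w u with hFdef
  have hFm : ∀ n, Measurable (F n) := by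
    intro n
    apply Measurable.mul _ hwm
    have : (fun u => Fq (θ1 u - θ2 u) (h1 n u - h2 n u) (t n))
        = fun u => (max ((θ1 u - θ2 u) + t n * (h1 n u - h2 n u)) 0 ^ 2
            - max (θ1 u - θ2 u) 0 ^ 2
            - 2 * t n * (if 0 < θ1 u - θ2 u then (θ1 u - θ2 u) * (h1 n u - h2 n u) else 0))
            / (t n) ^ 2 := rfl
    rw [this]
    exact ((((hgm.add ((hkm n).const_mul (t n))).max measurable_const).pow_const 2).sub
      (((hgm.max measurable_const).pow_const 2)) |>.sub
      ((Measurable.ite (measurableSet_lt measurable_const hgm)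
        (hgm.mul (hkm n)) measurable_const).const_mul (2 * t n))).div_const _
  -- rewrite the sequence as ∫ F n
  have hrw : ∀ n,
      ((∫ u, (max ((θ1 u + t n * h1 n u) - (θ2 u + t n * h2 n u)) 0) ^ 2 * w u)
          - (∫ u, (max (θ1 u - θ2 u) 0) ^ 2 * w u)
          - 2 * t n * ∫ u in {u | θ2 u < θ1 u},
              (θ1 u - θ2 u) * (h1 n u - h2 n u) * w u) / (t n) ^ 2
        = ∫ u, F n u := by
    intro n
    obtain ⟨D1, hD1⟩ := hh1b n
    obtain ⟨D2, hD2⟩ := hh2b n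
    have hA : Integrable (fun u =>
        (max ((θ1 u - θ2 u) + t n * (h1 n u - h2 n u)) 0) ^ 2 * w u) := by
      refine intmul hwint
        (((hgm.add ((hkm n).const_mul (t n))).max measurable_const).pow_const 2)
        (C := (C1 + C2 + t n * (D1 + D2)) ^ 2) (fun u => ?_)
      refine maxsq_abs_le ?_
      have b1 := abs_le.mp (hC1 u); have b2 := abs_le.mp (hC2 u)
      have b3 := abs_le.mp (hD1 u); have b4 := abs_le.mp (hD2 u)
      have htn := (ht n).le
      rw [abs_le]
      constructor <;> nlinarith [mul_le_mul_of_nonneg_left b3.1 htn,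
        mul_le_mul_of_nonneg_left b3.2 htn, mul_le_mul_of_nonneg_left b4.1 htn,
        mul_le_mul_of_nonneg_left b4.2 htn]
    have hB : Integrable (fun u => (max (θ1 u - θ2 u) 0) ^ 2 * w u) := by
      refine intmul hwint ((hgm.max measurable_const).pow_const 2)
        (C := (C1 + C2) ^ 2) (fun u => ?_)
      refine maxsq_abs_le ?_
      have b1 := abs_le.mp (hC1 u); have b2 := abs_le.mp (hC2 u)
      rw [abs_le]; constructor <;> linarith
    have hI : Integrable (fun u =>
        (if θ2 u < θ1 u then (θ1 u - θ2 u) * (h1 n u - h2 n u) else 0) * w u) := by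
      refine intmul hwint
        (Measurable.ite hS (hgm.mul (hkm n)) measurable_const)
        (C := (C1 + C2) * (D1 + D2)) (fun u => ?_)
      by_cases hc : θ2 u < θ1 u
      · rw [if_pos hc, abs_mul]
        have e1 : |θ1 u - θ2 u| ≤ C1 + C2 := by
          have b1 := abs_le.mp (hC1 u); have b2 := abs_le.mp (hC2 u)
          rw [abs_le]; constructor <;> linarith
        have e2 : |h1 n u - h2 n u| ≤ D1 + D2 := by
          have b3 := abs_le.mp (hD1 u); have b4 := abs_le.mp (hD2 u)
          rw [abs_le]; constructor <;> linarith
        exact mul_le_mul e1 e2 (abs_nonneg _) ((abs_nonneg _).trans e1)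
      · rw [if_neg hc, abs_zero]
        have e1 : (0:ℝ) ≤ C1 + C2 := by
          have := abs_nonneg (θ1 u); have := abs_nonneg (θ2 u)
          have := hC1 u; have := hC2 u; linarith
        have e2 : (0:ℝ) ≤ D1 + D2 := by
          have := abs_nonneg (h1 n u); have := abs_nonneg (h2 n u)
          have := hD1 u; have := hD2 u; linarith
        positivity
    have hAmatch : (fun u =>
        (max ((θ1 u + t n * h1 n u) - (θ2 u + t n * h2 n u)) 0) ^ 2 * w u)
        = fun u => (max ((θ1 u - θ2 u) + t n * (h1 n u - h2 n u)) 0) ^ 2 * w u := by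
      funext u
      rw [show (θ1 u + t n * h1 n u) - (θ2 u + t n * h2 n u)
        = (θ1 u - θ2 u) + t n * (h1 n u - h2 n u) from by ring]
    have hIS : ∫ u in {u | θ2 u < θ1 u}, (θ1 u - θ2 u) * (h1 n u - h2 n u) * w u
        = ∫ u, (if θ2 u < θ1 u then (θ1 u - θ2 u) * (h1 n u - h2 n u) else 0) * w u := by
      rw [← integral_indicator hS]
      congr 1
      funext u
      simp [Set.indicator_apply, Set.mem_setOf_eq, ite_mul, zero_mul]
    have hFe : (fun u => F n u) = fun u => ((t n) ^ 2)⁻¹ *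
        ((max ((θ1 u - θ2 u) + t n * (h1 n u - h2 n u)) 0) ^ 2 * w u
          - (max (θ1 u - θ2 u) 0) ^ 2 * w u
          - (2 * t n) * ((if θ2 u < θ1 u then (θ1 u - θ2 u) * (h1 n u - h2 n u) else 0) * w u)) := by
      funext u
      show Fq (θ1 u - θ2 u) (h1 n u - h2 n u) (t n) * w u = _
      by_cases hc : θ2 u < θ1 u
      · rw [show Fq (θ1 u - θ2 u) (h1 n u - h2 n u) (t n)
          = (max ((θ1 u - θ2 u) + t n * (h1 n u - h2 n u)) 0 ^ 2 - max (θ1 u - θ2 u) 0 ^ 2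
            - 2 * t n * ((θ1 u - θ2 u) * (h1 n u - h2 n u))) / (t n) ^ 2 from by
            unfold Fq; rw [if_pos (sub_pos.mpr hc)], if_pos hc]
        ring
      · rw [show Fq (θ1 u - θ2 u) (h1 n u - h2 n u) (t n)
          = (max ((θ1 u - θ2 u) + t n * (h1 n u - h2 n u)) 0 ^ 2 - max (θ1 u - θ2 u) 0 ^ 2
            - 2 * t n * 0) / (t n) ^ 2 from by
            unfold Fq; rw [if_neg (by rw [sub_pos]; exact hc)], if_neg hc]
        ring
    have hAB : Integrable (fun u =>
        (max ((θ1 u - θ2 u) + t n * (h1 n u - h2 n u)) 0) ^ 2 * w u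
          - (max (θ1 u - θ2 u) 0) ^ 2 * w u) := hA.sub hB
    have hI2 : Integrable (fun u =>
        (2 * t n) * ((if θ2 u < θ1 u then (θ1 u - θ2 u) * (h1 n u - h2 n u) else 0) * w u)) :=
      hI.const_mul (2 * t n)
    rw [hAmatch, hIS, hFe, integral_const_mul,
      integral_sub hAB hI2, integral_sub hA hB, integral_const_mul]
    ring
  have hfun : (fun n =>
      ((∫ u, (max ((θ1 u + t n * h1 n u) - (θ2 u + t n * h2 n u)) 0) ^ 2 * w u)
        - (∫ u, (max (θ1 u - θ2 u) 0) ^ 2 * w u)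
        - 2 * t n * ∫ u in {u | θ2 u < θ1 u},
            (θ1 u - θ2 u) * (h1 n u - h2 n u) * w u) / (t n) ^ 2)
      = fun n => ∫ u, F n u := funext hrw
  rw [hfun]
  -- the limit function
  set G : ℝ → ℝ := fun u =>
    ((if θ1 u = θ2 u then max (hl1 u - hl2 u) 0 ^ 2 else 0)
      + (if θ2 u < θ1 u then (hl1 u - hl2 u) ^ 2 else 0)) * w u with hGdef
  have hkl_bound : ∀ u, |hl1 u - hl2 u| ≤ Cl1 + Cl2 := by
    intro u
    have b1 := abs_le.mp (hCl1 u); have b2 := abs_le.mp (hCl2 u)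
    rw [abs_le]; constructor <;> linarith
  have hG1 : Integrable (fun u => max (hl1 u - hl2 u) 0 ^ 2 * w u) := by
    refine intmul hwint ((hklm.max measurable_const).pow_const 2)
      (C := (Cl1 + Cl2) ^ 2) (fun u => maxsq_abs_le (hkl_bound u))
  have hG2 : Integrable (fun u => (hl1 u - hl2 u) ^ 2 * w u) := by
    refine intmul hwint (hklm.pow_const 2) (C := (Cl1 + Cl2) ^ 2) (fun u => ?_)
    rw [abs_pow, ← sq_abs]
    exact pow_le_pow_left₀ (abs_nonneg _) (by simpa using hkl_bound u) 2
  have hLeq : (∫ u in {u | θ1 u = θ2 u}, (max (hl1 u - hl2 u) 0) ^ 2 * w u)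
      + ∫ u in {u | θ2 u < θ1 u}, (hl1 u - hl2 u) ^ 2 * w u = ∫ u, G u := by
    rw [← integral_indicator hZ, ← integral_indicator hS,
      ← integral_add (hG1.indicator hZ) (hG2.indicator hS)]
    congr 1
    funext u
    simp [hGdef, Set.indicator_apply, Set.mem_setOf_eq, add_mul, ite_mul, zero_mul]
  rw [hLeq]
  -- uniform tail bound
  obtain ⟨N1, hN1⟩ := eventually_atTop.1 (hconv1 1 one_pos)
  obtain ⟨N2, hN2⟩ := eventually_atTop.1 (hconv2 1 one_pos)
  set N := max N1 N2 with hN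
  set K := Cl1 + Cl2 + 2 with hK
  have hKn : ∀ n, N ≤ n → ∀ u, |h1 n u - h2 n u| ≤ K := by
    intro n hn u
    have e1 := abs_le.mp (hN1 n (le_trans (le_max_left _ _) hn) u)
    have e2 := abs_le.mp (hN2 n (le_trans (le_max_right _ _) hn) u)
    have b1 := abs_le.mp (hCl1 u); have b2 := abs_le.mp (hCl2 u)
    rw [abs_le]; constructor <;> [skip; skip] <;> simp only [hK] <;> linarith
  rw [← tendsto_add_atTop_iff_nat N]
  apply tendsto_integral_of_dominated_convergence (fun u => K ^ 2 * w u)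
  · intro m; exact (hFm (m + N)).aestronglyMeasurable
  · exact hwint.const_mul _
  · intro m
    refine Eventually.of_forall fun u => ?_
    have hb := hKn (m + N) (Nat.le_add_left N m) u
    have hq : |Fq (θ1 u - θ2 u) (h1 (m + N) u - h2 (m + N) u) (t (m + N))| ≤ K ^ 2 := by
      refine (Fq_bound _ _ _ (ht _)).trans ?_
      rw [← sq_abs]
      exact pow_le_pow_left₀ (abs_nonneg _) hb 2
    calc ‖F (m + N) u‖ = |Fq (θ1 u - θ2 u) (h1 (m + N) u - h2 (m + N) u) (t (m + N))| * w u := by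
          rw [hFdef]; simp only [Real.norm_eq_abs, abs_mul, abs_of_nonneg (hw0 u)]
      _ ≤ K ^ 2 * w u := mul_le_mul_of_nonneg_right hq (hw0 u)
  · refine Eventually.of_forall fun u => ?_
    have hks : Tendsto (fun m => h1 (m + N) u - h2 (m + N) u) atTop (𝓝 (hl1 u - hl2 u)) :=
      (hk u).comp (tendsto_add_atTop_nat N)
    have hts : Tendsto (fun m => t (m + N)) atTop (𝓝 0) :=
      htlim.comp (tendsto_add_atTop_nat N)
    have hmul : Tendsto (fun m => t (m + N) * (h1 (m + N) u - h2 (m + N) u)) atTop (𝓝 0) := by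
      simpa using hts.mul hks
    rcases lt_trichotomy (θ1 u) (θ2 u) with hlt | heq | hgt
    · have hGu : G u = 0 := by
        simp [hGdef, hlt.ne, not_lt.mpr hlt.le]
      rw [hGu]
      have hev : ∀ᶠ m in atTop,
          |t (m + N) * (h1 (m + N) u - h2 (m + N) u)| < θ2 u - θ1 u := by
        have h0 : (0:ℝ) < θ2 u - θ1 u := sub_pos.mpr hlt
        filter_upwards [Metric.tendsto_nhds.mp hmul _ h0] with m hm
        rw [Real.dist_eq, sub_zero] at hm
        exact hm
      refine Tendsto.congr' ?_ tendsto_const_nhds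
      filter_upwards [hev] with m hm
      have h1' : θ1 u - θ2 u < 0 := sub_neg.mpr hlt
      have h2' : (θ1 u - θ2 u) + t (m + N) * (h1 (m + N) u - h2 (m + N) u) < 0 := by
        have := le_abs_self (t (m + N) * (h1 (m + N) u - h2 (m + N) u))
        linarith
      show (0:ℝ) = F (m + N) u
      rw [hFdef]
      simp only
      rw [Fq_neg_eq _ _ _ h1' h2', zero_mul]
    · have hGu : G u = max (hl1 u - hl2 u) 0 ^ 2 * w u := by
        simp [hGdef, heq]
      rw [hGu]
      have hFeq : ∀ m, F (m + N) u = max (h1 (m + N) u - h2 (m + N) u) 0 ^ 2 * w u := by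
        intro m
        rw [hFdef]
        simp only
        rw [show θ1 u - θ2 u = 0 from sub_eq_zero.mpr heq, Fq_zero_eq _ _ (ht _)]
      have htd : Tendsto (fun m => max (h1 (m + N) u - h2 (m + N) u) 0 ^ 2 * w u) atTop
          (𝓝 (max (hl1 u - hl2 u) 0 ^ 2 * w u)) :=
        ((hks.max tendsto_const_nhds).pow 2).mul_const _
      exact htd.congr fun m => (hFeq m).symm
    · have hGu : G u = (hl1 u - hl2 u) ^ 2 * w u := by
        simp [hGdef, hgt, hgt.ne']
      rw [hGu]
      have hev : ∀ᶠ m in atTop,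
          |t (m + N) * (h1 (m + N) u - h2 (m + N) u)| < θ1 u - θ2 u := by
        have h0 : (0:ℝ) < θ1 u - θ2 u := sub_pos.mpr hgt
        filter_upwards [Metric.tendsto_nhds.mp hmul _ h0] with m hm
        rw [Real.dist_eq, sub_zero] at hm
        exact hm
      refine Tendsto.congr' ?_ ((hks.pow 2).mul_const (w u))
      filter_upwards [hev] with m hm
      have h1' : 0 < θ1 u - θ2 u := sub_pos.mpr hgt
      have h2' : 0 < (θ1 u - θ2 u) + t (m + N) * (h1 (m + N) u - h2 (m + N) u) := by
        have := neg_abs_le (t (m + N) * (h1 (m + N) u - h2 (m + N) u))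
        linarith
      show (h1 (m + N) u - h2 (m + N) u) ^ 2 * w u = F (m + N) u
      rw [hFdef]
      simp only
      rw [Fq_pos_eq _ _ _ (ht _) h1' h2']
end

section
/- (Lemma C.2(ii), Kolmogorov–Smirnov conditional moment inequality functional, second order derivative.) Let F be a nonempty compact metric space. For a pair θ = (θ⁽¹⁾, θ⁽²⁾) of bounded real-valued functions on F define φ(θ) = sup_{f ∈ F} { max{θ⁽¹⁾(f), 0}² + θ⁽²⁾(f)² }. Suppose θ⁽¹⁾ is continuous with θ⁽¹⁾(f) ≤ 0 for all f ∈ F, and θ⁽²⁾ ≡ 0. Let F₀ = {f ∈ F : θ⁽¹⁾(f) = 0}. Then for every sequence t_n ↓ 0 and every sequence of pairs h_n of bounded functions on F converging in supremum norm (coordinatewise) to a pair h = (h⁽¹⁾, h⁽²⁾) of continuous functions on F, one has φ(θ + t_n h_n)/t_n² → max{ sup_{f ∈ F₀} ( max{h⁽¹⁾(f), 0}² + h⁽²⁾(f)² ), sup_{f ∈ F∖F₀} h⁽²⁾(f)² }, where the supremum over an empty set is taken to be 0. -/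
open Filter Topology

private lemma abs_sq_sub_sq_le' {C ε a b : ℝ} (ha : |a| ≤ C) (hb : |b| ≤ C)
    (hab : |a - b| ≤ ε) : |a ^ 2 - b ^ 2| ≤ 2 * C * ε := by
  have h : a ^ 2 - b ^ 2 = (a - b) * (a + b) := by ring
  rw [h, abs_mul]
  have h1 : |a + b| ≤ 2 * C := (abs_add_le a b).trans (by linarith)
  have hε : 0 ≤ ε := (abs_nonneg _).trans hab
  calc |a - b| * |a + b| ≤ ε * (2 * C) :=
        mul_le_mul hab h1 (abs_nonneg _) hε
    _ = 2 * C * ε := by ring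

private lemma sq_le_of_abs_le' {a b : ℝ} (h : |a| ≤ b) : a ^ 2 ≤ b ^ 2 :=
  sq_le_sq' (neg_le_of_abs_le h) (le_of_abs_le h)

set_option maxHeartbeats 1000000 in
/-- Lemma C.2(ii): second order Hadamard directional derivative of the Kolmogorov–Smirnov
conditional moment inequality functional `φ(θ) = sup_{f∈F} { max{θ⁽¹⁾(f),0}² + θ⁽²⁾(f)² }`
at `θ = (θ⁽¹⁾, 0)` with `θ⁽¹⁾ ≤ 0` continuous:
`φ(θ + t_n h_n)/t_n² → max{ sup_{F₀} (max{h⁽¹⁾,0}² + (h⁽²⁾)²), sup_{F∖F₀} (h⁽²⁾)² }`,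
where `F₀ = {f : θ⁽¹⁾(f) = 0}` and suprema over empty sets are `0`. -/
theorem ks_cmi_second_order_hadamard
    (F : Type*) [MetricSpace F] [CompactSpace F] [Nonempty F]
    (θ1 : F → ℝ) (hθ1c : Continuous θ1) (hθ1np : ∀ f, θ1 f ≤ 0)
    (t : ℕ → ℝ) (ht : ∀ n, 0 < t n) (htlim : Tendsto t atTop (𝓝 0))
    (h1 h2 : ℕ → F → ℝ) (hl1 hl2 : F → ℝ)
    (hh1b : ∀ n, ∃ C, ∀ f, |h1 n f| ≤ C) (hh2b : ∀ n, ∃ C, ∀ f, |h2 n f| ≤ C)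
    (hl1c : Continuous hl1) (hl2c : Continuous hl2)
    (hconv1 : ∀ ε > (0 : ℝ), ∀ᶠ n in atTop, ∀ f, |h1 n f - hl1 f| ≤ ε)
    (hconv2 : ∀ ε > (0 : ℝ), ∀ᶠ n in atTop, ∀ f, |h2 n f - hl2 f| ≤ ε) :
    Tendsto (fun n =>
        (⨆ f : F, ((max (θ1 f + t n * h1 n f) 0) ^ 2 + (t n * h2 n f) ^ 2)) / (t n) ^ 2)
      atTop
      (𝓝 (max (⨆ f ∈ {f : F | θ1 f = 0}, ((max (hl1 f) 0) ^ 2 + (hl2 f) ^ 2))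
              (⨆ f ∈ {f : F | θ1 f ≠ 0}, (hl2 f) ^ 2))) := by
  classical
  -- uniform bound on the limit functions
  obtain ⟨C, hC1, hC1b, hC2b⟩ :
      ∃ C : ℝ, 1 ≤ C ∧ (∀ f, |hl1 f| ≤ C) ∧ ∀ f, |hl2 f| ≤ C := by
    obtain ⟨x, -, hx⟩ := isCompact_univ.exists_isMaxOn (Set.univ_nonempty (α := F))
      (hl1c.abs.continuousOn)
    obtain ⟨y, -, hy⟩ := isCompact_univ.exists_isMaxOn (Set.univ_nonempty (α := F))
      (hl2c.abs.continuousOn)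
    refine ⟨max 1 (max |hl1 x| |hl2 y|), le_max_left _ _, fun f => ?_, fun f => ?_⟩
    · exact (hx (Set.mem_univ f)).trans ((le_max_left _ _).trans (le_max_right _ _))
    · exact (hy (Set.mem_univ f)).trans ((le_max_right _ _).trans (le_max_right _ _))
  have hC0 : (0 : ℝ) ≤ C := zero_le_one.trans hC1
  -- bound on θ1
  obtain ⟨Cθ, hCθ⟩ : ∃ Cθ : ℝ, ∀ f, |θ1 f| ≤ Cθ := by
    obtain ⟨x, -, hx⟩ := isCompact_univ.exists_isMaxOn (Set.univ_nonempty (α := F))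
      (hθ1c.abs.continuousOn)
    exact ⟨|θ1 x|, fun f => hx (Set.mem_univ f)⟩
  set Ψ1 : F → ℝ := fun f => (max (hl1 f) 0) ^ 2 + (hl2 f) ^ 2 with hΨ1def
  have hΨ1f : ∀ f, Ψ1 f = (max (hl1 f) 0) ^ 2 + (hl2 f) ^ 2 := fun f => rfl
  have hΨ1c : Continuous Ψ1 := by
    apply Continuous.add
    · exact (hl1c.max continuous_const).pow 2
    · exact hl2c.pow 2
  have hmaxhl1 : ∀ f, |max (hl1 f) 0| ≤ C := by
    intro f
    rw [abs_of_nonneg (le_max_right _ _)]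
    exact max_le ((le_abs_self _).trans (hC1b f)) hC0
  have hΨ1b : ∀ f, Ψ1 f ≤ 2 * C ^ 2 := by
    intro f
    have := sq_le_of_abs_le' (hmaxhl1 f)
    have h2 : (hl2 f) ^ 2 ≤ C ^ 2 := by
      have := sq_le_of_abs_le' (le_refl |hl2 f|)
      nlinarith [hC2b f, abs_nonneg (hl2 f), sq_abs (hl2 f)]
    rw [hΨ1f]
    nlinarith [sq_abs (max (hl1 f) 0)]
  have hΨ1nn : ∀ f, 0 ≤ Ψ1 f := fun f => by rw [hΨ1f]; positivity
  -- the inner suprema as functions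
  set gA : F → ℝ := fun f => ⨆ _ : f ∈ {f : F | θ1 f = 0}, ((max (hl1 f) 0) ^ 2 + (hl2 f) ^ 2)
    with hgAdef
  set gB : F → ℝ := fun f => ⨆ _ : f ∈ {f : F | θ1 f ≠ 0}, (hl2 f) ^ 2 with hgBdef
  have hgA_eq : ∀ f, gA f = if θ1 f = 0 then Ψ1 f else 0 := by
    intro f
    by_cases h : θ1 f = 0
    · rw [if_pos h]
      exact ciSup_pos (h : f ∈ {f : F | θ1 f = 0})
    · rw [if_neg h]
      haveI : IsEmpty (f ∈ {f : F | θ1 f = 0}) := ⟨fun hm => h hm⟩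
      exact Real.iSup_of_isEmpty _
  have hgB_eq : ∀ f, gB f = if θ1 f ≠ 0 then (hl2 f) ^ 2 else 0 := by
    intro f
    by_cases h : θ1 f ≠ 0
    · rw [if_pos h]
      exact ciSup_pos (h : f ∈ {f : F | θ1 f ≠ 0})
    · rw [if_neg h]
      haveI : IsEmpty (f ∈ {f : F | θ1 f ≠ 0}) := ⟨fun hm => h hm⟩
      exact Real.iSup_of_isEmpty _
  have hgAnn : ∀ f, 0 ≤ gA f := by
    intro f; rw [hgA_eq]; split_ifs
    · exact hΨ1nn f
    · exact le_refl 0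
  have hgAb : ∀ f, gA f ≤ 2 * C ^ 2 := by
    intro f; rw [hgA_eq]; split_ifs
    · exact hΨ1b f
    · positivity
  have hgBnn : ∀ f, 0 ≤ gB f := by
    intro f; rw [hgB_eq]; split_ifs
    · positivity
    · exact le_refl 0
  have hgBb : ∀ f, gB f ≤ 2 * C ^ 2 := by
    intro f; rw [hgB_eq]; split_ifs with h
    · have := sq_le_of_abs_le' (hC2b f)
      nlinarith [sq_abs (hl2 f)]
    · positivity
  set S1 : ℝ := ⨆ f ∈ {f : F | θ1 f = 0}, ((max (hl1 f) 0) ^ 2 + (hl2 f) ^ 2) with hS1def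
  set S2 : ℝ := ⨆ f ∈ {f : F | θ1 f ≠ 0}, (hl2 f) ^ 2 with hS2def
  have hS1eq : S1 = ⨆ f, gA f := rfl
  have hS2eq : S2 = ⨆ f, gB f := rfl
  have hbddA : BddAbove (Set.range gA) := by
    refine ⟨2 * C ^ 2, ?_⟩
    rintro _ ⟨f, rfl⟩; exact hgAb f
  have hbddB : BddAbove (Set.range gB) := by
    refine ⟨2 * C ^ 2, ?_⟩
    rintro _ ⟨f, rfl⟩; exact hgBb f
  have hS1_ub : ∀ f, θ1 f = 0 → Ψ1 f ≤ S1 := by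
    intro f hf
    have : Ψ1 f = gA f := by rw [hgA_eq, if_pos hf]
    rw [this, hS1eq]
    exact le_ciSup hbddA f
  have hS2_ub : ∀ f, θ1 f ≠ 0 → (hl2 f) ^ 2 ≤ S2 := by
    intro f hf
    have : (hl2 f) ^ 2 = gB f := by rw [hgB_eq, if_pos hf]
    rw [this, hS2eq]
    exact le_ciSup hbddB f
  have hS1nn : 0 ≤ S1 := by
    rw [hS1eq]
    exact (hgAnn (Classical.arbitrary F)).trans (le_ciSup hbddA _)
  have hS2nn : 0 ≤ S2 := by
    rw [hS2eq]
    exact (hgBnn (Classical.arbitrary F)).trans (le_ciSup hbddB _)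
  set L : ℝ := max S1 S2 with hLdef
  have hS1L : S1 ≤ L := le_max_left _ _
  have hS2L : S2 ≤ L := le_max_right _ _
  -- the δ-claim
  have hdelta : ∀ ε > (0 : ℝ), ∃ δ > (0 : ℝ), ∀ f, -δ < θ1 f → Ψ1 f < S1 + ε := by
    intro ε hε
    by_cases hKe : ({f : F | S1 + ε ≤ Ψ1 f}).Nonempty
    · have hKclosed : IsClosed {f : F | S1 + ε ≤ Ψ1 f} :=
        isClosed_le continuous_const hΨ1c
      obtain ⟨f₀, hf₀K, hf₀max⟩ := hKclosed.isCompact.exists_isMaxOn hKe hθ1c.continuousOn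
      have hf₀K' : S1 + ε ≤ Ψ1 f₀ := hf₀K
      have hneg : θ1 f₀ < 0 := by
        rcases lt_or_eq_of_le (hθ1np f₀) with h | h
        · exact h
        · exfalso; have := hS1_ub f₀ h; linarith
      refine ⟨-θ1 f₀, by linarith, fun f hf => ?_⟩
      by_contra hcon
      push_neg at hcon
      have : θ1 f ≤ θ1 f₀ := hf₀max hcon
      simp only [neg_neg] at hf
      linarith
    · refine ⟨1, one_pos, fun f _ => ?_⟩
      by_contra hcon
      push_neg at hcon
      exact hKe ⟨f, hcon⟩
  -- numerator and its properties
  set N : ℕ → ℝ := fun n =>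
    ⨆ f : F, ((max (θ1 f + t n * h1 n f) 0) ^ 2 + (t n * h2 n f) ^ 2) with hNdef
  have hbddN : ∀ n, BddAbove (Set.range fun f =>
      (max (θ1 f + t n * h1 n f) 0) ^ 2 + (t n * h2 n f) ^ 2) := by
    intro n
    obtain ⟨C1n, hC1n⟩ := hh1b n
    obtain ⟨C2n, hC2n⟩ := hh2b n
    refine ⟨(Cθ + t n * C1n) ^ 2 + (t n * C2n) ^ 2, ?_⟩
    rintro _ ⟨f, rfl⟩
    show (max (θ1 f + t n * h1 n f) 0) ^ 2 + (t n * h2 n f) ^ 2 ≤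
      (Cθ + t n * C1n) ^ 2 + (t n * C2n) ^ 2
    have htn := (ht n).le
    have h1' : (max (θ1 f + t n * h1 n f) 0) ^ 2 ≤ (Cθ + t n * C1n) ^ 2 := by
      apply sq_le_of_abs_le'
      rw [abs_of_nonneg (le_max_right _ _)]
      refine max_le ?_ ?_
      · have := abs_add_le (θ1 f) (t n * h1 n f)
        have h2 : |t n * h1 n f| = t n * |h1 n f| := by
          rw [abs_mul, abs_of_nonneg htn]
        have := mul_le_mul_of_nonneg_left (hC1n f) htn
        have := hCθ f
        nlinarith [le_abs_self (θ1 f + t n * h1 n f)]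
      · have h0 : 0 ≤ Cθ := (abs_nonneg _).trans (hCθ f)
        have := mul_le_mul_of_nonneg_left ((abs_nonneg (h1 n f)).trans (hC1n f)) htn
        nlinarith
    have h2' : (t n * h2 n f) ^ 2 ≤ (t n * C2n) ^ 2 := by
      apply sq_le_of_abs_le'
      rw [abs_mul, abs_of_nonneg htn]
      exact mul_le_mul_of_nonneg_left (hC2n f) htn
    linarith
  have htermnn : ∀ n (f : F),
      (0 : ℝ) ≤ (max (θ1 f + t n * h1 n f) 0) ^ 2 + (t n * h2 n f) ^ 2 := by
    intro n f; positivity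
  have hNnn : ∀ n, 0 ≤ N n := by
    intro n
    exact (htermnn n (Classical.arbitrary F)).trans (le_ciSup (hbddN n) _)
  -- upper bound
  have hupper : ∀ ε > (0 : ℝ), ∀ᶠ n in atTop, N n ≤ t n ^ 2 * (L + ε) := by
    intro ε hε
    obtain ⟨δ, hδ, hδP⟩ := hdelta (ε / 2) (by linarith)
    set ε'' : ℝ := min 1 (ε / (2 * (4 * C + 4))) with hε''def
    have h4C : (0 : ℝ) < 2 * (4 * C + 4) := by linarith
    have hε''pos : 0 < ε'' := lt_min one_pos (div_pos hε h4C)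
    have hε''le1 : ε'' ≤ 1 := min_le_left _ _
    have herr : (2 * (C + 1)) * ε'' ≤ ε / 4 := by
      have h1' : (2 * (C + 1)) * (ε / (2 * (4 * C + 4))) = ε / 4 := by
        field_simp
      have := mul_le_mul_of_nonneg_left (min_le_right 1 (ε / (2 * (4 * C + 4))))
        (by linarith : (0 : ℝ) ≤ 2 * (C + 1))
      linarith
    have hη : (0 : ℝ) < δ / (C + ε'') := div_pos hδ (by linarith)
    filter_upwards [hconv1 ε'' hε''pos, hconv2 ε'' hε''pos,
      htlim.eventually_lt_const hη] with n hn1 hn2 hnt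
    have htn := ht n
    have ht2 : (0 : ℝ) < t n ^ 2 := by positivity
    rw [hNdef]
    refine ciSup_le fun f => ?_
    have hb1 : |h1 n f| ≤ C + ε'' := by
      have := abs_sub_abs_le_abs_sub (h1 n f) (hl1 f)
      have := hn1 f
      have := hC1b f
      linarith
    have hb2 : |h2 n f| ≤ C + ε'' := by
      have := abs_sub_abs_le_abs_sub (h2 n f) (hl2 f)
      have := hn2 f
      have := hC2b f
      linarith
    have hth1 : t n * |h1 n f| < δ := by
      have hCp : (0 : ℝ) < C + ε'' := by linarith
      calc t n * |h1 n f| ≤ t n * (C + ε'') :=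
            mul_le_mul_of_nonneg_left hb1 htn.le
        _ < δ / (C + ε'') * (C + ε'') := by
            exact mul_lt_mul_of_pos_right hnt hCp
        _ = δ := div_mul_cancel₀ _ (ne_of_gt hCp)
    have e2 : (h2 n f) ^ 2 ≤ (hl2 f) ^ 2 + 2 * (C + 1) * ε'' := by
      have habs : |h2 n f| ≤ C + 1 := hb2.trans (by linarith)
      have habs2 : |hl2 f| ≤ C + 1 := (hC2b f).trans (by linarith)
      have := abs_sq_sub_sq_le' habs habs2 (hn2 f)
      have := le_of_abs_le this
      linarith
    by_cases hcase : -δ < θ1 f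
    · -- near the zero set
      have hΨlt : Ψ1 f < S1 + ε / 2 := hδP f hcase
      have hmax : max (θ1 f + t n * h1 n f) 0 ≤ t n * max (h1 n f) 0 := by
        refine max_le ?_ ?_
        · have h0 : θ1 f + t n * h1 n f ≤ t n * h1 n f := by
            have := hθ1np f; linarith
          have h1' : t n * h1 n f ≤ t n * max (h1 n f) 0 :=
            mul_le_mul_of_nonneg_left (le_max_left _ _) htn.le
          linarith
        · positivity
      have hmaxsq : (max (θ1 f + t n * h1 n f) 0) ^ 2 ≤ t n ^ 2 * (max (h1 n f) 0) ^ 2 := by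
        have h0 : 0 ≤ max (θ1 f + t n * h1 n f) 0 := le_max_right _ _
        calc (max (θ1 f + t n * h1 n f) 0) ^ 2 ≤ (t n * max (h1 n f) 0) ^ 2 :=
              pow_le_pow_left₀ h0 hmax 2
          _ = t n ^ 2 * (max (h1 n f) 0) ^ 2 := by ring
      have e1 : (max (h1 n f) 0) ^ 2 ≤ (max (hl1 f) 0) ^ 2 + 2 * (C + 1) * ε'' := by
        have habs : |max (h1 n f) 0| ≤ C + 1 := by
          rw [abs_of_nonneg (le_max_right _ _)]
          refine max_le ((le_abs_self _).trans (hb1.trans (by linarith))) (by linarith)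
        have habs2 : |max (hl1 f) 0| ≤ C + 1 := (hmaxhl1 f).trans (by linarith)
        have hd : |max (h1 n f) 0 - max (hl1 f) 0| ≤ ε'' :=
          (abs_max_sub_max_le_abs _ _ _).trans (hn1 f)
        have := le_of_abs_le (abs_sq_sub_sq_le' habs habs2 hd)
        linarith
      have E1 := mul_le_mul_of_nonneg_left e1 ht2.le
      have E2 := mul_le_mul_of_nonneg_left e2 ht2.le
      have hrw : (t n * h2 n f) ^ 2 = t n ^ 2 * (h2 n f) ^ 2 := by ring
      have hfinal : (max (hl1 f) 0) ^ 2 + 2 * (C + 1) * ε'' +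
          ((hl2 f) ^ 2 + 2 * (C + 1) * ε'') ≤ L + ε := by
        linarith [herr, hΨlt, hS1L, hΨ1f f]
      have := mul_le_mul_of_nonneg_left hfinal ht2.le
      linarith [hmaxsq, E1, E2, hrw, this]
    · -- far from the zero set
      push_neg at hcase
      have hmax0 : max (θ1 f + t n * h1 n f) 0 = 0 := by
        apply max_eq_right
        have : t n * h1 n f ≤ t n * |h1 n f| :=
          mul_le_mul_of_nonneg_left (le_abs_self _) htn.le
        linarith
      have hfne : θ1 f ≠ 0 := by
        intro h; rw [h] at hcase; linarith
      have hS2f : (hl2 f) ^ 2 ≤ S2 := hS2_ub f hfne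
      have hrw : (t n * h2 n f) ^ 2 = t n ^ 2 * (h2 n f) ^ 2 := by ring
      have E2 := mul_le_mul_of_nonneg_left e2 ht2.le
      have hfinal : (hl2 f) ^ 2 + 2 * (C + 1) * ε'' ≤ L + ε := by
        have : S2 ≤ L := hS2L
        linarith
      have := mul_le_mul_of_nonneg_left hfinal ht2.le
      rw [hmax0]
      linarith [E2, hrw, this]
  -- lower bound
  have hlower : ∀ ε > (0 : ℝ), ∀ᶠ n in atTop, t n ^ 2 * (L - ε) ≤ N n := by
    intro ε hε
    set ε'' : ℝ := min 1 (ε / (2 * (4 * C + 4))) with hε''def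
    have h4C : (0 : ℝ) < 2 * (4 * C + 4) := by linarith
    have hε''pos : 0 < ε'' := lt_min one_pos (div_pos hε h4C)
    have hε''le1 : ε'' ≤ 1 := min_le_left _ _
    have herr : (2 * (C + 1)) * ε'' ≤ ε / 4 := by
      have h1' : (2 * (C + 1)) * (ε / (2 * (4 * C + 4))) = ε / 4 := by
        field_simp
      have := mul_le_mul_of_nonneg_left (min_le_right 1 (ε / (2 * (4 * C + 4))))
        (by linarith : (0 : ℝ) ≤ 2 * (C + 1))
      linarith
    have hA : ∀ᶠ n in atTop, t n ^ 2 * (S1 - ε) ≤ N n := by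
      obtain ⟨f, hf⟩ : ∃ f, S1 - ε / 2 < gA f := by
        apply exists_lt_of_lt_ciSup
        rw [← hS1eq]
        linarith
      by_cases hfF0 : θ1 f = 0
      · have hf' : S1 - ε / 2 < Ψ1 f := by
          rwa [hgA_eq, if_pos hfF0] at hf
        filter_upwards [hconv1 ε'' hε''pos, hconv2 ε'' hε''pos] with n hn1 hn2
        have htn := ht n
        have ht2 : (0 : ℝ) < t n ^ 2 := by positivity
        have hb1 : |h1 n f| ≤ C + ε'' := by
          have := abs_sub_abs_le_abs_sub (h1 n f) (hl1 f)
          have := hn1 f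
          have := hC1b f
          linarith
        have hb2 : |h2 n f| ≤ C + ε'' := by
          have := abs_sub_abs_le_abs_sub (h2 n f) (hl2 f)
          have := hn2 f
          have := hC2b f
          linarith
        have e1 : (max (hl1 f) 0) ^ 2 ≤ (max (h1 n f) 0) ^ 2 + 2 * (C + 1) * ε'' := by
          have habs : |max (h1 n f) 0| ≤ C + 1 := by
            rw [abs_of_nonneg (le_max_right _ _)]
            refine max_le ((le_abs_self _).trans (hb1.trans (by linarith))) (by linarith)
          have habs2 : |max (hl1 f) 0| ≤ C + 1 := (hmaxhl1 f).trans (by linarith)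
          have hd : |max (h1 n f) 0 - max (hl1 f) 0| ≤ ε'' :=
            (abs_max_sub_max_le_abs _ _ _).trans (hn1 f)
          have := neg_le_of_abs_le (abs_sq_sub_sq_le' habs habs2 hd)
          linarith
        have e2 : (hl2 f) ^ 2 ≤ (h2 n f) ^ 2 + 2 * (C + 1) * ε'' := by
          have habs : |h2 n f| ≤ C + 1 := hb2.trans (by linarith)
          have habs2 : |hl2 f| ≤ C + 1 := (hC2b f).trans (by linarith)
          have := neg_le_of_abs_le (abs_sq_sub_sq_le' habs habs2 (hn2 f))
          linarith
        have hmaxeq : max (θ1 f + t n * h1 n f) 0 = t n * max (h1 n f) 0 := by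
          rw [hfF0, zero_add]
          rw [mul_max_of_nonneg _ _ htn.le, mul_zero]
        have hterm : t n ^ 2 * (S1 - ε) ≤
            (max (θ1 f + t n * h1 n f) 0) ^ 2 + (t n * h2 n f) ^ 2 := by
          rw [hmaxeq]
          have hkey : S1 - ε ≤ (max (h1 n f) 0) ^ 2 + (h2 n f) ^ 2 := by
            have := hΨ1f f
            linarith
          have := mul_le_mul_of_nonneg_left hkey ht2.le
          nlinarith [this]
        calc t n ^ 2 * (S1 - ε) ≤ _ := hterm
          _ ≤ N n := le_ciSup (hbddN n) f
      · have hS1small : S1 - ε / 2 < 0 := by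
          rwa [hgA_eq, if_neg hfF0] at hf
        filter_upwards with n
        have htn := ht n
        have ht2 : (0 : ℝ) < t n ^ 2 := by positivity
        nlinarith [hNnn n]
    have hB : ∀ᶠ n in atTop, t n ^ 2 * (S2 - ε) ≤ N n := by
      obtain ⟨f, hf⟩ : ∃ f, S2 - ε / 2 < gB f := by
        apply exists_lt_of_lt_ciSup
        rw [← hS2eq]
        linarith
      by_cases hfF0 : θ1 f ≠ 0
      · have hf' : S2 - ε / 2 < (hl2 f) ^ 2 := by
          rwa [hgB_eq, if_pos hfF0] at hf
        filter_upwards [hconv2 ε'' hε''pos] with n hn2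
        have htn := ht n
        have ht2 : (0 : ℝ) < t n ^ 2 := by positivity
        have hb2 : |h2 n f| ≤ C + ε'' := by
          have := abs_sub_abs_le_abs_sub (h2 n f) (hl2 f)
          have := hn2 f
          have := hC2b f
          linarith
        have e2 : (hl2 f) ^ 2 ≤ (h2 n f) ^ 2 + 2 * (C + 1) * ε'' := by
          have habs : |h2 n f| ≤ C + 1 := hb2.trans (by linarith)
          have habs2 : |hl2 f| ≤ C + 1 := (hC2b f).trans (by linarith)
          have := neg_le_of_abs_le (abs_sq_sub_sq_le' habs habs2 (hn2 f))
          linarith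
        have hterm : t n ^ 2 * (S2 - ε) ≤
            (max (θ1 f + t n * h1 n f) 0) ^ 2 + (t n * h2 n f) ^ 2 := by
          have hkey : S2 - ε ≤ (h2 n f) ^ 2 := by linarith
          have := mul_le_mul_of_nonneg_left hkey ht2.le
          nlinarith [sq_nonneg (max (θ1 f + t n * h1 n f) 0)]
        calc t n ^ 2 * (S2 - ε) ≤ _ := hterm
          _ ≤ N n := le_ciSup (hbddN n) f
      · have hS2small : S2 - ε / 2 < 0 := by
          rwa [hgB_eq, if_neg hfF0] at hf
        filter_upwards with n
        have htn := ht n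
        have ht2 : (0 : ℝ) < t n ^ 2 := by positivity
        nlinarith [hNnn n]
    filter_upwards [hA, hB] with n hA' hB'
    rcases le_total S1 S2 with h | h
    · have : L = S2 := max_eq_right h
      rw [this]; exact hB'
    · have : L = S1 := max_eq_left h
      rw [this]; exact hA'
  -- conclude
  rw [Metric.tendsto_nhds]
  intro ε hε
  filter_upwards [hupper (ε / 2) (by linarith), hlower (ε / 2) (by linarith)] with n hu hl'
  have htn := ht n
  have ht2 : (0 : ℝ) < t n ^ 2 := by positivity
  have hub : N n / t n ^ 2 ≤ L + ε / 2 := by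
    rw [div_le_iff₀ ht2]
    linarith [hu]
  have hlb : L - ε / 2 ≤ N n / t n ^ 2 := by
    rw [le_div_iff₀ ht2]
    linarith [hl']
  rw [Real.dist_eq, abs_lt]
  constructor <;> [skip; skip] <;> linarith
end

section
/- (Lemma C.3(i), GMM overidentification functional, first order degeneracy.) Let Γ ⊂ ℝ^k be nonempty and compact, let W be an m×m real symmetric positive definite matrix, and for a bounded function θ : Γ → ℝ^m define φ(θ) = inf_{γ ∈ Γ} θ(γ)ᵀ W θ(γ). Suppose θ(γ₀) = 0 for some γ₀ ∈ Γ, so that φ(θ) = 0. Then for every sequence t_n ↓ 0 and every sequence of bounded functions h_n : Γ → ℝ^m converging in supremum norm to a bounded function h : Γ → ℝ^m, one has φ(θ + t_n h_n)/t_n → 0; that is, φ is Hadamard differentiable at θ with identically zero derivative. -/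
open Filter Topology Matrix


lemma quad_nonneg {m : ℕ} {W : Matrix (Fin m) (Fin m) ℝ} (hW : W.PosDef)
    (x : Fin m → ℝ) : 0 ≤ x ⬝ᵥ W.mulVec x := by
  simpa using hW.posSemidef.re_dotProduct_nonneg x

lemma coord_le_norm {m : ℕ} (v : EuclideanSpace ℝ (Fin m)) (i : Fin m) :
    |v i| ≤ ‖v‖ := by
  have h1 : ‖v‖ ^ 2 = ∑ j, (v j) ^ 2 := by
    rw [EuclideanSpace.norm_eq, Real.sq_sqrt (by positivity)]
    simp [sq_abs]
  refine abs_le_of_sq_le_sq ?_ (norm_nonneg v)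
  rw [h1]
  exact Finset.single_le_sum (fun j _ => sq_nonneg (v j)) (Finset.mem_univ i)

lemma quad_le {m : ℕ} (W : Matrix (Fin m) (Fin m) ℝ) (v : EuclideanSpace ℝ (Fin m)) :
    (v : Fin m → ℝ) ⬝ᵥ W.mulVec v ≤ (∑ i, ∑ j, |W i j|) * ‖v‖ ^ 2 := by
  have : (v : Fin m → ℝ) ⬝ᵥ W.mulVec v = ∑ i, ∑ j, v i * (W i j * v j) := by
    simp [dotProduct, Matrix.mulVec, Finset.mul_sum]
  rw [this, Finset.sum_mul]
  refine Finset.sum_le_sum fun i _ => ?_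
  rw [Finset.sum_mul]
  refine Finset.sum_le_sum fun j _ => ?_
  calc v i * (W i j * v j) ≤ |v i * (W i j * v j)| := le_abs_self _
    _ = |W i j| * (|v i| * |v j|) := by rw [abs_mul, abs_mul]; ring
    _ ≤ |W i j| * (‖v‖ * ‖v‖) := by
        refine mul_le_mul_of_nonneg_left ?_ (abs_nonneg _)
        exact mul_le_mul (coord_le_norm v i) (coord_le_norm v j) (abs_nonneg _) (norm_nonneg _)
    _ = |W i j| * ‖v‖ ^ 2 := by ring

/-- Lemma C.3(i): the GMM overidentification functional
`φ(θ) = inf_{γ∈Γ} θ(γ)ᵀ W θ(γ)` (with `Γ ⊂ ℝ^k` nonempty compact and `W` symmetric positive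
definite) is Hadamard differentiable with identically zero derivative at any bounded `θ`
vanishing at some `γ₀ ∈ Γ`: `φ(θ + t_n h_n)/t_n → 0`. -/
theorem gmm_overid_first_order_degeneracy
    (k m : ℕ) (Γ : Set (EuclideanSpace ℝ (Fin k))) (hΓne : Γ.Nonempty) (hΓc : IsCompact Γ)
    (W : Matrix (Fin m) (Fin m) ℝ) (hWsymm : W.IsSymm) (hWpd : W.PosDef)
    (θ : EuclideanSpace ℝ (Fin k) → EuclideanSpace ℝ (Fin m))
    (hθb : ∃ C, ∀ γ ∈ Γ, ‖θ γ‖ ≤ C)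
    (γ₀ : EuclideanSpace ℝ (Fin k)) (hγ₀ : γ₀ ∈ Γ) (hθγ₀ : θ γ₀ = 0)
    (t : ℕ → ℝ) (ht : ∀ n, 0 < t n) (htlim : Tendsto t atTop (𝓝 0))
    (hn : ℕ → EuclideanSpace ℝ (Fin k) → EuclideanSpace ℝ (Fin m))
    (h : EuclideanSpace ℝ (Fin k) → EuclideanSpace ℝ (Fin m))
    (hhnb : ∀ n, ∃ C, ∀ γ ∈ Γ, ‖hn n γ‖ ≤ C) (hhb : ∃ C, ∀ γ ∈ Γ, ‖h γ‖ ≤ C)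
    (hconv : ∀ ε > (0 : ℝ), ∀ᶠ n in atTop, ∀ γ ∈ Γ, ‖hn n γ - h γ‖ ≤ ε) :
    Tendsto (fun n =>
        (⨅ γ : Γ, (θ (γ : EuclideanSpace ℝ (Fin k)) + t n • hn n γ) ⬝ᵥ
            W.mulVec (θ (γ : EuclideanSpace ℝ (Fin k)) + t n • hn n γ)) / t n)
      atTop (𝓝 0) := by
  haveI : Nonempty Γ := hΓne.to_subtype
  set B := ∑ i, ∑ j, |W i j| with hB
  have hB0 : 0 ≤ B := Finset.sum_nonneg fun i _ =>
    Finset.sum_nonneg fun j _ => abs_nonneg _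
  set M := ‖h γ₀‖ + 1 with hM
  set f := fun n =>
      (⨅ γ : Γ, (θ (γ : EuclideanSpace ℝ (Fin k)) + t n • hn n γ) ⬝ᵥ
          W.mulVec (θ (γ : EuclideanSpace ℝ (Fin k)) + t n • hn n γ)) / t n with hf
  have hbdd : ∀ n, BddBelow (Set.range fun γ : Γ =>
      (θ (γ : EuclideanSpace ℝ (Fin k)) + t n • hn n γ) ⬝ᵥ
        W.mulVec (θ (γ : EuclideanSpace ℝ (Fin k)) + t n • hn n γ)) := by
    intro n
    refine ⟨0, ?_⟩
    rintro x ⟨γ, rfl⟩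
    exact quad_nonneg hWpd _
  have hnonneg : ∀ n, 0 ≤ f n := by
    intro n
    apply div_nonneg _ (ht n).le
    exact le_ciInf fun γ => quad_nonneg hWpd _
  have hub : ∀ᶠ n in atTop, f n ≤ B * M ^ 2 * t n := by
    filter_upwards [hconv 1 one_pos] with n hc
    have hMn : ‖hn n γ₀‖ ≤ M := by
      calc ‖hn n γ₀‖ = ‖hn n γ₀ - h γ₀ + h γ₀‖ := by rw [sub_add_cancel]
        _ ≤ ‖hn n γ₀ - h γ₀‖ + ‖h γ₀‖ := norm_add_le _ _
        _ ≤ 1 + ‖h γ₀‖ := add_le_add (hc γ₀ hγ₀) le_rfl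
        _ = M := by rw [hM]; ring
    have hle : (⨅ γ : Γ, (θ (γ : EuclideanSpace ℝ (Fin k)) + t n • hn n γ) ⬝ᵥ
          W.mulVec (θ (γ : EuclideanSpace ℝ (Fin k)) + t n • hn n γ)) ≤
        (θ γ₀ + t n • hn n γ₀) ⬝ᵥ W.mulVec (θ γ₀ + t n • hn n γ₀) :=
      ciInf_le (hbdd n) (⟨γ₀, hγ₀⟩ : Γ)
    have heq : (θ γ₀ + t n • hn n γ₀) ⬝ᵥ W.mulVec (θ γ₀ + t n • hn n γ₀)
        = t n ^ 2 * ((hn n γ₀ : Fin m → ℝ) ⬝ᵥ W.mulVec (hn n γ₀)) := by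
      rw [hθγ₀, zero_add]
      have : ((t n • hn n γ₀ : EuclideanSpace ℝ (Fin m)) : Fin m → ℝ)
          = t n • (hn n γ₀ : Fin m → ℝ) := rfl
      rw [this, smul_dotProduct, WithLp.ofLp_zero, zero_add, Matrix.mulVec_smul, dotProduct_smul]
      simp [smul_eq_mul]; ring
    have hquad : (hn n γ₀ : Fin m → ℝ) ⬝ᵥ W.mulVec (hn n γ₀) ≤ B * M ^ 2 := by
      calc (hn n γ₀ : Fin m → ℝ) ⬝ᵥ W.mulVec (hn n γ₀) ≤ B * ‖hn n γ₀‖ ^ 2 :=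
            quad_le W (hn n γ₀)
        _ ≤ B * M ^ 2 := by
            apply mul_le_mul_of_nonneg_left _ hB0
            exact pow_le_pow_left₀ (norm_nonneg _) hMn 2
    have hnum : (⨅ γ : Γ, (θ (γ : EuclideanSpace ℝ (Fin k)) + t n • hn n γ) ⬝ᵥ
          W.mulVec (θ (γ : EuclideanSpace ℝ (Fin k)) + t n • hn n γ)) ≤
        t n ^ 2 * (B * M ^ 2) := by
      calc _ ≤ _ := hle
        _ = _ := heq
        _ ≤ t n ^ 2 * (B * M ^ 2) :=
          mul_le_mul_of_nonneg_left hquad (sq_nonneg _)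
    calc f n ≤ (t n ^ 2 * (B * M ^ 2)) / t n :=
          div_le_div_of_nonneg_right hnum (ht n).le
      _ = B * M ^ 2 * t n := by rw [div_eq_iff (ht n).ne']; ring
  have hg : Tendsto (fun n => B * M ^ 2 * t n) atTop (𝓝 0) := by
    simpa using htlim.const_mul (B * M ^ 2)
  exact squeeze_zero' (Eventually.of_forall hnonneg) hub hg
end

section
/- (Lemma D.1(i), common conditionally heteroskedastic features functional, first order degeneracy.) Let S^k = {γ ∈ ℝ^k : ‖γ‖ = 1} and for a bounded function θ : S^k → ℝ^m define φ(θ) = inf_{γ ∈ S^k} ‖θ(γ)‖². Suppose θ(γ₀) = 0 for some γ₀ ∈ S^k, so that φ(θ) = 0. Then for every sequence t_n ↓ 0 and every sequence of bounded functions h_n : S^k → ℝ^m converging in supremum norm to a bounded function h : S^k → ℝ^m, one has φ(θ + t_n h_n)/t_n → 0; that is, φ is Hadamard differentiable at θ with identically zero derivative. -/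
open Filter Topology

/-- Lemma D.1(i): the common-CH-features functional `φ(θ) = inf_{γ∈S^k} ‖θ(γ)‖²` on the
unit sphere is Hadamard differentiable with identically zero derivative at any bounded `θ`
vanishing at some unit vector `γ₀`: `φ(θ + t_n h_n)/t_n → 0`. -/
theorem common_ch_first_order_degeneracy
    (k m : ℕ)
    (θ : EuclideanSpace ℝ (Fin k) → EuclideanSpace ℝ (Fin m))
    (hθb : ∃ C, ∀ γ : EuclideanSpace ℝ (Fin k), ‖γ‖ = 1 → ‖θ γ‖ ≤ C)
    (γ₀ : EuclideanSpace ℝ (Fin k)) (hγ₀ : ‖γ₀‖ = 1) (hθγ₀ : θ γ₀ = 0)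
    (t : ℕ → ℝ) (ht : ∀ n, 0 < t n) (htlim : Tendsto t atTop (𝓝 0))
    (hn : ℕ → EuclideanSpace ℝ (Fin k) → EuclideanSpace ℝ (Fin m))
    (h : EuclideanSpace ℝ (Fin k) → EuclideanSpace ℝ (Fin m))
    (hhnb : ∀ n, ∃ C, ∀ γ : EuclideanSpace ℝ (Fin k), ‖γ‖ = 1 → ‖hn n γ‖ ≤ C)
    (hhb : ∃ C, ∀ γ : EuclideanSpace ℝ (Fin k), ‖γ‖ = 1 → ‖h γ‖ ≤ C)
    (hconv : ∀ ε > (0 : ℝ), ∀ᶠ n in atTop,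
      ∀ γ : EuclideanSpace ℝ (Fin k), ‖γ‖ = 1 → ‖hn n γ - h γ‖ ≤ ε) :
    Tendsto (fun n =>
        (⨅ γ : {γ : EuclideanSpace ℝ (Fin k) // ‖γ‖ = 1},
            ‖θ (γ : EuclideanSpace ℝ (Fin k)) + t n • hn n γ‖ ^ 2) / t n)
      atTop (𝓝 0) := by
  have hne : Nonempty {γ : EuclideanSpace ℝ (Fin k) // ‖γ‖ = 1} := ⟨⟨γ₀, hγ₀⟩⟩
  have hbdd : ∀ n, BddBelow (Set.range fun γ : {γ : EuclideanSpace ℝ (Fin k) // ‖γ‖ = 1} =>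
      ‖θ (γ : EuclideanSpace ℝ (Fin k)) + t n • hn n γ‖ ^ 2) := by
    intro n
    refine ⟨0, ?_⟩
    rintro x ⟨γ, rfl⟩
    positivity
  have hupper : ∀ n,
      (⨅ γ : {γ : EuclideanSpace ℝ (Fin k) // ‖γ‖ = 1},
          ‖θ (γ : EuclideanSpace ℝ (Fin k)) + t n • hn n γ‖ ^ 2) / t n
        ≤ t n * ‖hn n γ₀‖ ^ 2 := by
    intro n
    rw [div_le_iff₀ (ht n)]
    have h1 : (⨅ γ : {γ : EuclideanSpace ℝ (Fin k) // ‖γ‖ = 1},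
        ‖θ (γ : EuclideanSpace ℝ (Fin k)) + t n • hn n γ‖ ^ 2)
          ≤ ‖θ γ₀ + t n • hn n γ₀‖ ^ 2 := ciInf_le (hbdd n) ⟨γ₀, hγ₀⟩
    have h2 : ‖θ γ₀ + t n • hn n γ₀‖ ^ 2 = t n * ‖hn n γ₀‖ ^ 2 * t n := by
      rw [hθγ₀, zero_add, norm_smul, Real.norm_eq_abs, abs_of_pos (ht n)]
      ring
    linarith
  have hlow : ∀ n, 0 ≤
      (⨅ γ : {γ : EuclideanSpace ℝ (Fin k) // ‖γ‖ = 1},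
          ‖θ (γ : EuclideanSpace ℝ (Fin k)) + t n • hn n γ‖ ^ 2) / t n := by
    intro n
    apply div_nonneg _ (ht n).le
    exact le_ciInf fun γ => by positivity
  -- the upper bound tends to 0
  have hub : Tendsto (fun n => t n * ‖hn n γ₀‖ ^ 2) atTop (𝓝 0) := by
    have hev : ∀ᶠ n in atTop, t n * ‖hn n γ₀‖ ^ 2 ≤ t n * (‖h γ₀‖ + 1) ^ 2 := by
      filter_upwards [hconv 1 one_pos] with n hn1
      have hb : ‖hn n γ₀‖ ≤ ‖h γ₀‖ + 1 := by
        have := hn1 γ₀ hγ₀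
        have := norm_sub_norm_le (hn n γ₀) (h γ₀)
        linarith
      have : ‖hn n γ₀‖ ^ 2 ≤ (‖h γ₀‖ + 1) ^ 2 := by
        apply pow_le_pow_left₀ (norm_nonneg _) hb
      nlinarith [ (ht n).le ]
    have hub2 : Tendsto (fun n => t n * (‖h γ₀‖ + 1) ^ 2) atTop (𝓝 0) := by
      have := htlim.mul_const ((‖h γ₀‖ + 1) ^ 2)
      simpa using this
    exact squeeze_zero' (Eventually.of_forall fun n => mul_nonneg (ht n).le (by positivity)) hev hub2
  exact squeeze_zero' (Eventually.of_forall hlow) (Eventually.of_forall hupper) hub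
end

section
/- (Lemma D.1(ii), second order directional derivative of the common-CH-features functional, stated with the analytic hypotheses established in its proof.) Let Δ₁, …, Δ_m be real symmetric k×k matrices, let θ₀ : S^k → ℝ^m be given by θ₀(γ) = (γᵀΔ₁γ, …, γᵀΔ_mγ), and let Γ₀ = {γ ∈ S^k : θ₀(γ) = 0}. Assume: (a) Γ₀ ≠ ∅; (b) Δ_j γ₀ = 0 for every γ₀ ∈ Γ₀ and every j = 1,…,m; (c) there exist C > 0 and ε̄ > 0 such that for every ε ∈ (0, ε̄] and every γ ∈ S^k with dist(γ, Γ₀) ≥ ε one has ‖θ₀(γ)‖ ≥ C ε². Then for every sequence t_n ↓ 0 and every sequence of bounded functions h_n : S^k → ℝ^m converging in supremum norm to a continuous function h : S^k → ℝ^m, one has (inf_{γ ∈ S^k} ‖θ₀(γ) + t_n h_n(γ)‖²)/t_n² → inf_{γ₀ ∈ Γ₀} inf_{v ∈ ℝ^k} ‖h(γ₀) + (vᵀΔ₁v, …, vᵀΔ_mv)‖². -/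
open Filter Topology Matrix

private lemma quad_shift {k : ℕ} (Δ : Matrix (Fin k) (Fin k) ℝ) (hs : Δ.IsSymm)
    (a w : Fin k → ℝ) (ha : Δ.mulVec a = 0) :
    (a + w) ⬝ᵥ Δ.mulVec (a + w) = w ⬝ᵥ Δ.mulVec w := by
  have h1 : a ⬝ᵥ Δ.mulVec w = 0 := by
    rw [Matrix.dotProduct_mulVec, ← Matrix.mulVec_transpose, hs.eq, ha, zero_dotProduct]
  have h2 : w ⬝ᵥ Δ.mulVec a = 0 := by rw [ha, dotProduct_zero]
  rw [Matrix.mulVec_add, add_dotProduct, dotProduct_add, dotProduct_add,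
    h1, h2, ha]
  simp

private lemma sq_lower_aux (L sL ρ ε X : ℝ) (hsL0 : 0 ≤ sL) (hsLsq : sL ^ 2 = L)
    (hρpos : 0 < ρ) (hρ1 : ρ ≤ 1) (hρε : ρ * (2 * sL + 2) ≤ ε) (hX0 : 0 ≤ X)
    (hX : sL - ρ ≤ X) : L - ε ≤ X ^ 2 := by
  rcases le_or_gt ρ sL with hc | hc
  · have h0 : (0:ℝ) ≤ sL - ρ := by linarith
    have h1 : (sL - ρ) ^ 2 ≤ X ^ 2 := by nlinarith
    nlinarith [mul_nonneg hρpos.le hsL0]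
  · have h1 : sL * sL ≤ ρ * ρ := mul_le_mul hc.le hc.le hsL0 hρpos.le
    have h2 : ρ * ρ ≤ ρ := by nlinarith
    have h3 : ρ ≤ ε := by nlinarith [mul_nonneg hρpos.le hsL0]
    nlinarith [sq_nonneg X]

/-- Lemma D.1(ii): second order Hadamard directional derivative of the common-CH-features
functional. With `θ₀(γ) = (γᵀΔ₁γ, …, γᵀΔ_mγ)` for symmetric matrices `Δⱼ`, nonempty zero
set `Γ₀ ⊆ S^k` with `Δⱼγ₀ = 0` on `Γ₀`, and the quadratic separation bound
`‖θ₀(γ)‖ ≥ Cε²` off `ε`-neighborhoods of `Γ₀`, one has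
`(inf_{γ∈S^k} ‖θ₀(γ) + t_n h_n(γ)‖²)/t_n² → inf_{γ₀∈Γ₀} inf_{v∈ℝ^k} ‖h(γ₀) + (vᵀΔⱼv)ⱼ‖²`. -/
theorem common_ch_second_order_hadamard
    (k m : ℕ) (Δ : Fin m → Matrix (Fin k) (Fin k) ℝ) (hΔsymm : ∀ j, (Δ j).IsSymm)
    (θ₀ : EuclideanSpace ℝ (Fin k) → EuclideanSpace ℝ (Fin m))
    (hθ₀def : ∀ γ : EuclideanSpace ℝ (Fin k), ∀ j : Fin m, θ₀ γ j = γ ⬝ᵥ (Δ j).mulVec γ)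
    (Γ₀ : Set (EuclideanSpace ℝ (Fin k)))
    (hΓ₀def : Γ₀ = {γ : EuclideanSpace ℝ (Fin k) | ‖γ‖ = 1 ∧ θ₀ γ = 0})
    (hΓ₀ne : Γ₀.Nonempty)
    (hker : ∀ γ₀ ∈ Γ₀, ∀ j : Fin m, (Δ j).mulVec γ₀ = 0)
    (C εbar : ℝ) (hC : 0 < C) (hεbar : 0 < εbar)
    (hsep : ∀ ε ∈ Set.Ioc (0 : ℝ) εbar, ∀ γ : EuclideanSpace ℝ (Fin k), ‖γ‖ = 1 →
      ε ≤ Metric.infDist γ Γ₀ → C * ε ^ 2 ≤ ‖θ₀ γ‖)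
    (t : ℕ → ℝ) (ht : ∀ n, 0 < t n) (htlim : Tendsto t atTop (𝓝 0))
    (hn : ℕ → EuclideanSpace ℝ (Fin k) → EuclideanSpace ℝ (Fin m))
    (h : EuclideanSpace ℝ (Fin k) → EuclideanSpace ℝ (Fin m))
    (hhnb : ∀ n, ∃ D, ∀ γ : EuclideanSpace ℝ (Fin k), ‖γ‖ = 1 → ‖hn n γ‖ ≤ D)
    (hhc : ContinuousOn h {γ : EuclideanSpace ℝ (Fin k) | ‖γ‖ = 1})
    (hconv : ∀ ε > (0 : ℝ), ∀ᶠ n in atTop,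
      ∀ γ : EuclideanSpace ℝ (Fin k), ‖γ‖ = 1 → ‖hn n γ - h γ‖ ≤ ε) :
    Tendsto (fun n =>
        (⨅ γ : {γ : EuclideanSpace ℝ (Fin k) // ‖γ‖ = 1},
            ‖θ₀ (γ : EuclideanSpace ℝ (Fin k)) + t n • hn n γ‖ ^ 2) / (t n) ^ 2)
      atTop
      (𝓝 (⨅ γ₀ : Γ₀, ⨅ v : EuclideanSpace ℝ (Fin k),
            ‖h (γ₀ : EuclideanSpace ℝ (Fin k)) +
              (show EuclideanSpace ℝ (Fin m) from WithLp.toLp 2 (fun j => v ⬝ᵥ (Δ j).mulVec v))‖ ^ 2)) := by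
  classical
  -- Notation / basic facts
  set S : Set (EuclideanSpace ℝ (Fin k)) := {γ : EuclideanSpace ℝ (Fin k) | ‖γ‖ = 1} with hSdef
  obtain ⟨γs, hγsΓ⟩ := hΓ₀ne
  have hγsS : ‖γs‖ = 1 := by
    have := hγsΓ; rw [hΓ₀def] at this; exact this.1
  have hΓ₀ne' : Γ₀.Nonempty := ⟨γs, hγsΓ⟩
  have hSub : Nonempty {γ : EuclideanSpace ℝ (Fin k) // ‖γ‖ = 1} := ⟨⟨γs, hγsS⟩⟩
  have hΓne : Nonempty Γ₀ := ⟨⟨γs, hγsΓ⟩⟩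
  have hΓ₀S : ∀ γ₀ ∈ Γ₀, ‖γ₀‖ = 1 := by
    intro γ₀ hγ₀; rw [hΓ₀def] at hγ₀; exact hγ₀.1
  -- quadratic-form identities
  have key : ∀ γ₀ ∈ Γ₀, ∀ w : EuclideanSpace ℝ (Fin k), θ₀ (γ₀ + w) = θ₀ w := by
    intro γ₀ hγ₀ w
    ext j
    rw [hθ₀def, hθ₀def, WithLp.ofLp_add]
    exact quad_shift (Δ j) (hΔsymm j) γ₀ w (hker γ₀ hγ₀ j)
  have scale : ∀ (c : ℝ) (v : EuclideanSpace ℝ (Fin k)), θ₀ (c • v) = (c ^ 2) • θ₀ v := by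
    intro c v
    ext j
    rw [PiLp.smul_apply, hθ₀def, hθ₀def, smul_eq_mul, WithLp.ofLp_smul]
    rw [Matrix.mulVec_smul, dotProduct_smul, smul_dotProduct]
    simp [smul_eq_mul]; ring
  have hQ : ∀ v : EuclideanSpace ℝ (Fin k),
      (show EuclideanSpace ℝ (Fin m) from WithLp.toLp 2 (fun j => v ⬝ᵥ (Δ j).mulVec v)) = θ₀ v := by
    intro v; ext j; exact (hθ₀def v j).symm
  -- rewrite the limit
  have hIeq : (⨅ γ₀ : Γ₀, ⨅ v : EuclideanSpace ℝ (Fin k),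
        ‖h (γ₀ : EuclideanSpace ℝ (Fin k)) +
          (show EuclideanSpace ℝ (Fin m) from WithLp.toLp 2 (fun j => v ⬝ᵥ (Δ j).mulVec v))‖ ^ 2)
      = ⨅ γ₀ : Γ₀, ⨅ v : EuclideanSpace ℝ (Fin k),
          ‖h (γ₀ : EuclideanSpace ℝ (Fin k)) + θ₀ v‖ ^ 2 := by
    refine iInf_congr fun γ₀ => iInf_congr fun v => ?_
    rw [hQ]
  rw [hIeq]
  set L : ℝ := ⨅ γ₀ : Γ₀, ⨅ v : EuclideanSpace ℝ (Fin k),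
      ‖h (γ₀ : EuclideanSpace ℝ (Fin k)) + θ₀ v‖ ^ 2 with hLdef
  -- basic facts about L
  have hbd1 : ∀ γ₀ : Γ₀, BddBelow (Set.range fun v : EuclideanSpace ℝ (Fin k) =>
      ‖h (γ₀ : EuclideanSpace ℝ (Fin k)) + θ₀ v‖ ^ 2) := by
    intro γ₀; exact ⟨0, by rintro x ⟨v, rfl⟩; positivity⟩
  have hinner_nonneg : ∀ γ₀ : Γ₀,
      (0:ℝ) ≤ ⨅ v : EuclideanSpace ℝ (Fin k), ‖h (γ₀ : EuclideanSpace ℝ (Fin k)) + θ₀ v‖ ^ 2 :=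
    fun γ₀ => le_ciInf fun v => by positivity
  have hbd0 : BddBelow (Set.range fun γ₀ : Γ₀ =>
      ⨅ v : EuclideanSpace ℝ (Fin k), ‖h (γ₀ : EuclideanSpace ℝ (Fin k)) + θ₀ v‖ ^ 2) :=
    ⟨0, by rintro x ⟨γ₀, rfl⟩; exact hinner_nonneg γ₀⟩
  have hL0 : 0 ≤ L := le_ciInf hinner_nonneg
  have hLle : ∀ γ₀ : Γ₀, ∀ v : EuclideanSpace ℝ (Fin k),
      L ≤ ‖h (γ₀ : EuclideanSpace ℝ (Fin k)) + θ₀ v‖ ^ 2 := by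
    intro γ₀ v
    exact le_trans (ciInf_le hbd0 γ₀) (ciInf_le (hbd1 γ₀) v)
  have hsqrtL : ∀ γ₀ : Γ₀, ∀ v : EuclideanSpace ℝ (Fin k),
      Real.sqrt L ≤ ‖h (γ₀ : EuclideanSpace ℝ (Fin k)) + θ₀ v‖ := by
    intro γ₀ v
    have := Real.sqrt_le_sqrt (hLle γ₀ v)
    rwa [Real.sqrt_sq (norm_nonneg _)] at this
  -- compactness of the sphere, bound for h, uniform continuity
  have hScpt : IsCompact S := by
    have : S = Metric.sphere (0 : EuclideanSpace ℝ (Fin k)) 1 := by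
      ext γ; simp [hSdef, dist_eq_norm]
    rw [this]; exact isCompact_sphere 0 1
  obtain ⟨B, hB⟩ := hScpt.exists_bound_of_continuousOn hhc
  set M : ℝ := max B 0 + 1 with hMdef
  have hM1 : (1:ℝ) ≤ M := by
    have : (0:ℝ) ≤ max B 0 := le_max_right _ _
    linarith
  have hM0 : (0:ℝ) < M := lt_of_lt_of_le one_pos hM1
  have hhM : ∀ γ ∈ S, ‖h γ‖ ≤ M - 1 := by
    intro γ hγ
    have := hB γ hγ
    have : ‖h γ‖ ≤ max B 0 := le_trans this (le_max_left _ _)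
    linarith
  have hunif : UniformContinuousOn h S := hScpt.uniformContinuousOn_of_continuous hhc
  -- bddBelow for the minimized objective
  have hbdobj : ∀ n, BddBelow (Set.range fun γ : {γ : EuclideanSpace ℝ (Fin k) // ‖γ‖ = 1} =>
      ‖θ₀ (γ : EuclideanSpace ℝ (Fin k)) + t n • hn n γ‖ ^ 2) := by
    intro n
    exact ⟨0, by rintro x ⟨γ, rfl⟩; positivity⟩
  -- quantities
  have hsqrt_t_pos : ∀ n, 0 < Real.sqrt (t n) := fun n => Real.sqrt_pos.2 (ht n)
  have hsq_sqrt : ∀ n, Real.sqrt (t n) ^ 2 = t n := fun n => Real.sq_sqrt (ht n).le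
  -- ######## UPPER BOUND ########
  have upper : ∀ ε > (0:ℝ), ∀ᶠ n in atTop,
      (⨅ γ : {γ : EuclideanSpace ℝ (Fin k) // ‖γ‖ = 1},
          ‖θ₀ (γ : EuclideanSpace ℝ (Fin k)) + t n • hn n γ‖ ^ 2) / (t n) ^ 2 ≤ L + ε := by
    intro ε hε
    have hLlt : L < L + ε / 2 := by linarith
    obtain ⟨γ₀, hγ₀lt⟩ := exists_lt_of_ciInf_lt hLlt
    obtain ⟨v, hvlt⟩ := exists_lt_of_ciInf_lt hγ₀lt
    set g₀ : EuclideanSpace ℝ (Fin k) := (γ₀ : EuclideanSpace ℝ (Fin k)) with hg₀def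
    have hg₀Γ : g₀ ∈ Γ₀ := γ₀.2
    have hg₀S : ‖g₀‖ = 1 := hΓ₀S g₀ hg₀Γ
    -- sequences
    set s : ℕ → ℝ := fun n => Real.sqrt (t n) with hsdef
    set u : ℕ → EuclideanSpace ℝ (Fin k) := fun n => g₀ + s n • v with hudef
    set r : ℕ → ℝ := fun n => ‖u n‖ with hrdef
    have hslim : Tendsto s atTop (𝓝 0) := by
      have := (Real.continuous_sqrt.tendsto 0).comp htlim
      simpa [hsdef, Function.comp_def] using this
    have hulim : Tendsto u atTop (𝓝 g₀) := by
      have h1 : Tendsto (fun n => s n • v) atTop (𝓝 ((0:ℝ) • v)) := hslim.smul_const v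
      have := (tendsto_const_nhds (x := g₀)).add h1
      simpa using this
    have hrlim : Tendsto r atTop (𝓝 1) := by
      have := (continuous_norm.tendsto g₀).comp hulim
      simpa [hrdef, Function.comp_def, hg₀S] using this
    have hrpos : ∀ᶠ n in atTop, 0 < r n := hrlim.eventually (eventually_gt_nhds one_pos)
    set γseq : ℕ → EuclideanSpace ℝ (Fin k) := fun n => (r n)⁻¹ • u n with hγseqdef
    have hγlim : Tendsto γseq atTop (𝓝 g₀) := by
      have h1 : Tendsto (fun n => (r n)⁻¹) atTop (𝓝 (1:ℝ)⁻¹) := hrlim.inv₀ one_ne_zero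
      have := h1.smul hulim
      simpa using this
    have hγunit : ∀ n, 0 < r n → ‖γseq n‖ = 1 := by
      intro n hr
      show ‖(r n)⁻¹ • u n‖ = 1
      rw [norm_smul, Real.norm_eq_abs, abs_inv, abs_of_pos hr]
      exact inv_mul_cancel₀ hr.ne'
    -- limit of hn n (γseq n)
    have hγS : ∀ᶠ n in atTop, γseq n ∈ S := by
      filter_upwards [hrpos] with n hr
      exact hγunit n hr
    have hh1 : Tendsto (fun n => h (γseq n)) atTop (𝓝 (h g₀)) := by
      have hct : ContinuousWithinAt h S g₀ := hhc g₀ hg₀S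
      exact hct.tendsto.comp (tendsto_nhdsWithin_iff.2 ⟨hγlim, hγS⟩)
    have hh2 : Tendsto (fun n => hn n (γseq n) - h (γseq n)) atTop (𝓝 0) := by
      rw [NormedAddCommGroup.tendsto_nhds_zero]
      intro δ hδ
      filter_upwards [hconv (δ/2) (by positivity), hγS] with n hc hγ
      exact lt_of_le_of_lt (hc (γseq n) hγ) (by linarith)
    have hhn_lim : Tendsto (fun n => hn n (γseq n)) atTop (𝓝 (h g₀)) := by
      have := hh2.add hh1
      simpa using this
    -- limit of the full expression
    set w : ℕ → EuclideanSpace ℝ (Fin m) :=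
      fun n => ((r n)⁻¹ ^ 2) • θ₀ v + hn n (γseq n) with hwdef
    have hwlim : Tendsto (fun n => ‖w n‖ ^ 2) atTop (𝓝 (‖θ₀ v + h g₀‖ ^ 2)) := by
      have h1 : Tendsto (fun n => (r n)⁻¹ ^ 2) atTop (𝓝 (1:ℝ)) := by
        have := (hrlim.inv₀ one_ne_zero).pow 2
        simpa using this
      have h2 : Tendsto w atTop (𝓝 ((1:ℝ) • θ₀ v + h g₀)) :=
        (h1.smul_const (θ₀ v)).add hhn_lim
      rw [one_smul] at h2
      exact ((continuous_norm.tendsto _).comp h2).pow 2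
    have hvlt' : ‖θ₀ v + h g₀‖ ^ 2 < L + ε / 2 := by rwa [add_comm (h g₀)] at hvlt
    have hev : ∀ᶠ n in atTop, ‖w n‖ ^ 2 < L + ε / 2 :=
      hwlim.eventually (eventually_lt_nhds hvlt')
    -- conclude
    filter_upwards [hrpos, hev] with n hr hwlt
    have hunit : ‖γseq n‖ = 1 := hγunit n hr
    -- identity: θ₀ (γseq n) + t n • hn n (γseq n) = t n • w n
    have hθu : θ₀ (u n) = t n • θ₀ v := by
      rw [hudef]
      simp only
      rw [key g₀ hg₀Γ, scale, hsdef]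
      simp only
      rw [hsq_sqrt n]
    have hθγ : θ₀ (γseq n) = t n • (((r n)⁻¹ ^ 2) • θ₀ v) := by
      rw [hγseqdef]
      simp only
      rw [scale, hθu, smul_comm]
    have hident : θ₀ (γseq n) + t n • hn n (γseq n) = t n • w n := by
      rw [hθγ, hwdef, smul_add]
    -- so the objective at γseq n equals (t n)^2 * ‖w n‖^2
    have hval : ‖θ₀ (γseq n) + t n • hn n (γseq n)‖ ^ 2 = (t n) ^ 2 * ‖w n‖ ^ 2 := by
      rw [hident, norm_smul, Real.norm_eq_abs, abs_of_pos (ht n), mul_pow]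
    have hle1 : (⨅ γ : {γ : EuclideanSpace ℝ (Fin k) // ‖γ‖ = 1},
        ‖θ₀ (γ : EuclideanSpace ℝ (Fin k)) + t n • hn n γ‖ ^ 2)
        ≤ (t n) ^ 2 * ‖w n‖ ^ 2 := by
      have := ciInf_le (hbdobj n) (⟨γseq n, hunit⟩ :
        {γ : EuclideanSpace ℝ (Fin k) // ‖γ‖ = 1})
      rw [hval] at this
      exact this
    have htn2 : (0:ℝ) < (t n) ^ 2 := pow_pos (ht n) 2
    calc (⨅ γ : {γ : EuclideanSpace ℝ (Fin k) // ‖γ‖ = 1},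
            ‖θ₀ (γ : EuclideanSpace ℝ (Fin k)) + t n • hn n γ‖ ^ 2) / (t n) ^ 2
        ≤ ((t n) ^ 2 * ‖w n‖ ^ 2) / (t n) ^ 2 :=
          div_le_div_of_nonneg_right hle1 htn2.le
      _ = ‖w n‖ ^ 2 := by rw [mul_div_cancel_left₀ _ htn2.ne']
      _ ≤ L + ε := by linarith
  -- ######## LOWER BOUND ########
  have lower : ∀ ε > (0:ℝ), ∀ᶠ n in atTop,
      L - ε ≤ (⨅ γ : {γ : EuclideanSpace ℝ (Fin k) // ‖γ‖ = 1},
          ‖θ₀ (γ : EuclideanSpace ℝ (Fin k)) + t n • hn n γ‖ ^ 2) / (t n) ^ 2 := by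
    intro ε hε
    set sL : ℝ := Real.sqrt L with hsLdef
    have hsL0 : 0 ≤ sL := Real.sqrt_nonneg _
    have hsLsq : sL ^ 2 = L := Real.sq_sqrt hL0
    set ρ : ℝ := min 1 (ε / (2 * sL + 2)) with hρdef
    have hρpos : 0 < ρ := lt_min one_pos (by positivity)
    have hρ1 : ρ ≤ 1 := min_le_left _ _
    have hρε : ρ * (2 * sL + 2) ≤ ε := by
      have h1 : ρ ≤ ε / (2 * sL + 2) := min_le_right _ _
      have h2 : (0:ℝ) < 2 * sL + 2 := by linarith
      rw [le_div_iff₀ h2] at h1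
      exact h1
    obtain ⟨δ', hδ'pos, hδ'⟩ := Metric.uniformContinuousOn_iff.1 hunif (ρ/2) (by positivity)
    set K : ℝ := Real.sqrt ((M + sL) / C) with hKdef
    have hKarg : 0 < (M + sL) / C := by positivity
    have hKpos : 0 < K := Real.sqrt_pos.2 hKarg
    have hCK : C * K ^ 2 = M + sL := by
      rw [hKdef, Real.sq_sqrt hKarg.le]
      field_simp
    -- eventual conditions
    have hev1 : ∀ᶠ n in atTop, ∀ γ : EuclideanSpace ℝ (Fin k), ‖γ‖ = 1 →
        ‖hn n γ - h γ‖ ≤ min 1 (ρ/2) :=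
      hconv (min 1 (ρ/2)) (lt_min one_pos (by positivity))
    have hev2 : ∀ᶠ n in atTop, K * Real.sqrt (t n) < min εbar δ' := by
      have h1 : Tendsto (fun n => K * Real.sqrt (t n)) atTop (𝓝 0) := by
        have h2 : Tendsto (fun n => Real.sqrt (t n)) atTop (𝓝 0) := by
          have := (Real.continuous_sqrt.tendsto 0).comp htlim
          simpa [Function.comp_def] using this
        have := h2.const_mul K
        simpa using this
      exact h1.eventually (eventually_lt_nhds (lt_min hεbar hδ'pos))
    filter_upwards [hev1, hev2] with n hcn hKn
    set εn : ℝ := K * Real.sqrt (t n) with hεndef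
    have hεnpos : 0 < εn := mul_pos hKpos (hsqrt_t_pos n)
    have hεnεbar : εn ≤ εbar := le_trans hKn.le (min_le_left _ _)
    have hεnδ' : εn ≤ δ' := le_trans hKn.le (min_le_right _ _)
    have hεnsq : εn ^ 2 = K ^ 2 * t n := by
      rw [hεndef, mul_pow, hsq_sqrt n]
    -- the per-point bound
    have hpt : ∀ γ : {γ : EuclideanSpace ℝ (Fin k) // ‖γ‖ = 1},
        (L - ε) * (t n) ^ 2 ≤ ‖θ₀ (γ : EuclideanSpace ℝ (Fin k)) + t n • hn n γ‖ ^ 2 := by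
      rintro ⟨γ, hγu⟩
      simp only
      -- bound on hn n γ
      have hhnγ : ‖hn n γ‖ ≤ M := by
        have h1 : ‖hn n γ - h γ‖ ≤ 1 := le_trans (hcn γ hγu) (min_le_left _ _)
        have h2 : ‖h γ‖ ≤ M - 1 := hhM γ hγu
        calc ‖hn n γ‖ = ‖hn n γ - h γ + h γ‖ := by rw [sub_add_cancel]
          _ ≤ ‖hn n γ - h γ‖ + ‖h γ‖ := norm_add_le _ _
          _ ≤ 1 + (M - 1) := add_le_add h1 h2
          _ = M := by ring
      rcases le_or_gt εn (Metric.infDist γ Γ₀) with hfar | hnear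
      · -- far case
        have hsepγ : C * εn ^ 2 ≤ ‖θ₀ γ‖ := hsep εn ⟨hεnpos, hεnεbar⟩ γ hγu hfar
        have hθb : M * t n + sL * t n ≤ ‖θ₀ γ‖ := by
          calc M * t n + sL * t n = C * K ^ 2 * t n := by rw [hCK]; ring
            _ = C * εn ^ 2 := by rw [hεnsq]; ring
            _ ≤ ‖θ₀ γ‖ := hsepγ
        have hb1 : ‖θ₀ γ‖ ≤ ‖θ₀ γ + t n • hn n γ‖ + ‖t n • hn n γ‖ := by
          have e1 : θ₀ γ = (θ₀ γ + t n • hn n γ) + (-(t n • hn n γ)) := by abel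
          calc ‖θ₀ γ‖ = ‖(θ₀ γ + t n • hn n γ) + (-(t n • hn n γ))‖ := by rw [← e1]
            _ ≤ ‖θ₀ γ + t n • hn n γ‖ + ‖-(t n • hn n γ)‖ := norm_add_le _ _
            _ = ‖θ₀ γ + t n • hn n γ‖ + ‖t n • hn n γ‖ := by rw [norm_neg]
        have hb2 : ‖t n • hn n γ‖ ≤ t n * M := by
          rw [norm_smul, Real.norm_eq_abs, abs_of_pos (ht n)]
          exact mul_le_mul_of_nonneg_left hhnγ (ht n).le
        have hb3 : sL * t n ≤ ‖θ₀ γ + t n • hn n γ‖ := by linarith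
        have hb4 : (0:ℝ) ≤ sL * t n := mul_nonneg hsL0 (ht n).le
        have hb5 : (sL * t n) ^ 2 ≤ ‖θ₀ γ + t n • hn n γ‖ ^ 2 :=
          pow_le_pow_left₀ hb4 hb3 2
        calc (L - ε) * (t n) ^ 2 ≤ L * (t n) ^ 2 := by
              have := mul_nonneg hε.le (sq_nonneg (t n)); linarith [this]
          _ = (sL * t n) ^ 2 := by rw [mul_pow, hsLsq]
          _ ≤ _ := hb5
      · -- near case
        obtain ⟨g₀, hg₀Γ, hg₀d⟩ := (Metric.infDist_lt_iff hΓ₀ne').1 hnear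
        have hg₀S : ‖g₀‖ = 1 := hΓ₀S g₀ hg₀Γ
        set v : EuclideanSpace ℝ (Fin k) := (Real.sqrt (t n))⁻¹ • (γ - g₀) with hvdef
        have hγeq : γ = g₀ + Real.sqrt (t n) • v := by
          rw [hvdef, smul_inv_smul₀ (hsqrt_t_pos n).ne']
          abel
        have hθγ : θ₀ γ = t n • θ₀ v := by
          conv_lhs => rw [hγeq]
          rw [key g₀ hg₀Γ, scale, hsq_sqrt n]
        have hident : θ₀ γ + t n • hn n γ = t n • (θ₀ v + hn n γ) := by
          rw [hθγ, smul_add]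
        -- lower bound on ‖θ₀ v + hn n γ‖
        have hnL : sL ≤ ‖h g₀ + θ₀ v‖ := hsqrtL ⟨g₀, hg₀Γ⟩ v
        have hdh : ‖h γ - h g₀‖ ≤ ρ / 2 := by
          have := hδ' γ hγu g₀ hg₀S (lt_of_lt_of_le hg₀d hεnδ')
          rw [dist_eq_norm] at this
          exact this.le
        have hdn : ‖hn n γ - h γ‖ ≤ ρ / 2 := le_trans (hcn γ hγu) (min_le_right _ _)
        have hX : sL - ρ ≤ ‖θ₀ v + hn n γ‖ := by
          have hdec : h g₀ + θ₀ v = (θ₀ v + hn n γ) + (-(hn n γ - h γ)) + (-(h γ - h g₀)) := by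
            abel
          have : ‖h g₀ + θ₀ v‖ ≤ ‖θ₀ v + hn n γ‖ + ‖hn n γ - h γ‖ + ‖h γ - h g₀‖ := by
            rw [hdec]
            calc ‖(θ₀ v + hn n γ) + (-(hn n γ - h γ)) + (-(h γ - h g₀))‖
                ≤ ‖(θ₀ v + hn n γ) + (-(hn n γ - h γ))‖ + ‖-(h γ - h g₀)‖ := norm_add_le _ _
              _ ≤ ‖θ₀ v + hn n γ‖ + ‖-(hn n γ - h γ)‖ + ‖-(h γ - h g₀)‖ := by
                  have := norm_add_le (θ₀ v + hn n γ) (-(hn n γ - h γ))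
                  linarith
              _ = ‖θ₀ v + hn n γ‖ + ‖hn n γ - h γ‖ + ‖h γ - h g₀‖ := by
                  rw [norm_neg, norm_neg]
          linarith
        -- square it
        have hXsq : L - ε ≤ ‖θ₀ v + hn n γ‖ ^ 2 :=
          sq_lower_aux L sL ρ ε _ hsL0 hsLsq hρpos hρ1 hρε (norm_nonneg _) hX
        calc (L - ε) * (t n) ^ 2 ≤ ‖θ₀ v + hn n γ‖ ^ 2 * (t n) ^ 2 :=
              mul_le_mul_of_nonneg_right hXsq (sq_nonneg (t n))
          _ = ‖θ₀ γ + t n • hn n γ‖ ^ 2 := by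
              rw [hident, norm_smul, Real.norm_eq_abs, abs_of_pos (ht n), mul_pow]; ring
    -- conclude: divide by (t n)^2
    have hinf : (L - ε) * (t n) ^ 2 ≤ ⨅ γ : {γ : EuclideanSpace ℝ (Fin k) // ‖γ‖ = 1},
        ‖θ₀ (γ : EuclideanSpace ℝ (Fin k)) + t n • hn n γ‖ ^ 2 := le_ciInf hpt
    have htn2 : (0:ℝ) < (t n) ^ 2 := pow_pos (ht n) 2
    rw [le_div_iff₀ htn2]
    exact hinf
  -- ######## CONCLUSION ########
  rw [Metric.tendsto_nhds]
  intro ε hε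
  filter_upwards [upper (ε/2) (by positivity), lower (ε/2) (by positivity)] with n hu hl
  rw [Real.dist_eq, abs_sub_lt_iff]
  constructor <;> linarith
end

section
/- (Lemma D.6.) Fix Δ > 0 and k ∈ ℕ, k ≥ 1. For a unit vector γ₀ ∈ ℝ^k and t ∈ (0,1], define V_t(γ₀) = {v ∈ ℝ^k : ‖γ₀ + √t · v‖ = 1 and ‖v‖ ≤ Δ} and V(γ₀) = {v ∈ ℝ^k : ⟨γ₀, v⟩ = 0 and ‖v‖ ≤ Δ}. Then for every sequence (t_n) in (0,1] with t_n → 0, the supremum over all unit vectors γ₀ ∈ ℝ^k of the Hausdorff distance d_H(V_{t_n}(γ₀), V(γ₀)) converges to 0 as n → ∞. -/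
open Filter Topology RealInnerProductSpace

private lemma key_hausdorff {E : Type*} [NormedAddCommGroup E] [InnerProductSpace ℝ E]
    (Δ : ℝ) (hΔ : 0 < Δ) (γ₀ : E) (hγ : ‖γ₀‖ = 1) (s : ℝ) (hs : 0 < s)
    (hsΔ : s * Δ ≤ 1) :
    Metric.hausdorffDist {v : E | ‖γ₀ + s • v‖ = 1 ∧ ‖v‖ ≤ Δ}
      {v : E | ⟪γ₀, v⟫ = 0 ∧ ‖v‖ ≤ Δ} ≤ (Δ^3 + Δ^2) * s := by
  apply Metric.hausdorffDist_le_of_mem_dist (by positivity)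
  · rintro v ⟨hv1, hv2⟩
    have hvn : (0:ℝ) ≤ ‖v‖ := norm_nonneg v
    have hexp : (1:ℝ)^2 = 1^2 + 2 * (s * ⟪γ₀, v⟫) + (|s| * ‖v‖)^2 := by
      have h := norm_add_sq_real γ₀ (s • v)
      rw [hv1, hγ, real_inner_smul_right, norm_smul, Real.norm_eq_abs] at h
      exact h
    rw [abs_of_pos hs] at hexp
    have hI : ⟪γ₀, v⟫ = -(s * ‖v‖^2) / 2 := by
      have h2 : s * (2 * ⟪γ₀, v⟫ + s * ‖v‖^2) = 0 := by nlinarith [hexp]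
      rcases mul_eq_zero.mp h2 with h | h
      · exact absurd h (ne_of_gt hs)
      · linarith
    refine ⟨v - ⟪γ₀, v⟫ • γ₀, ⟨?_, ?_⟩, ?_⟩
    · rw [inner_sub_right, real_inner_smul_right, real_inner_self_eq_norm_sq, hγ]
      ring
    · have h2 : ‖v - ⟪γ₀, v⟫ • γ₀‖^2 = ‖v‖^2 - ⟪γ₀, v⟫^2 := by
        have h := norm_sub_sq_real v (⟪γ₀, v⟫ • γ₀)
        rw [real_inner_smul_right, real_inner_comm γ₀ v, norm_smul, Real.norm_eq_abs,
          hγ, mul_one, sq_abs] at h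
        rw [h]; ring
      nlinarith [norm_nonneg (v - ⟪γ₀, v⟫ • γ₀), sq_nonneg ⟪γ₀, v⟫]
    · rw [dist_eq_norm, sub_sub_cancel, norm_smul, Real.norm_eq_abs, hγ, mul_one, hI,
        abs_of_nonpos (by nlinarith [sq_nonneg ‖v‖])]
      nlinarith [mul_le_mul_of_nonneg_left (mul_le_mul hv2 hv2 hvn hΔ.le) hs.le,
        mul_nonneg hs.le (pow_nonneg hΔ.le 3)]
  · rintro w ⟨hw1, hw2⟩
    have hr0 : (0:ℝ) ≤ ‖w‖ := norm_nonneg w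
    set r := ‖w‖ with hrdef
    have hsr : s * r ≤ 1 := le_trans (by nlinarith) hsΔ
    set c := Real.sqrt (1 - (s * r / 2)^2) with hcdef
    have hx1 : (0:ℝ) ≤ 1 - (s * r / 2)^2 := by nlinarith [mul_nonneg hs.le hr0]
    have hc2 : c^2 = 1 - (s * r / 2)^2 := Real.sq_sqrt hx1
    have hc0 : (0:ℝ) ≤ c := Real.sqrt_nonneg _
    have hc1 : c ≤ 1 := by nlinarith
    have hc3 : 1 - c ≤ (s * r / 2)^2 := by nlinarith [mul_nonneg hc0 (by linarith : (0:ℝ) ≤ 1 - c)]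
    set b := -(s * r^2) / 2 with hbdef
    have hwg : ⟪w, γ₀⟫ = 0 := by rw [real_inner_comm]; exact hw1
    have hiv : ⟪γ₀, c • w + b • γ₀⟫ = b := by
      rw [inner_add_right, real_inner_smul_right, real_inner_smul_right, hw1,
        real_inner_self_eq_norm_sq, hγ]
      ring
    have hnv : ‖c • w + b • γ₀‖^2 = r^2 := by
      have h := norm_add_sq_real (c • w) (b • γ₀)
      rw [real_inner_smul_left, real_inner_smul_right, hwg, norm_smul, norm_smul,
        Real.norm_eq_abs, Real.norm_eq_abs, abs_of_nonneg hc0, hγ, mul_one, sq_abs] at h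
      rw [h, mul_pow, hc2, hbdef]
      ring
    refine ⟨c • w + b • γ₀, ⟨?_, ?_⟩, ?_⟩
    · have h := norm_add_sq_real γ₀ (s • (c • w + b • γ₀))
      rw [real_inner_smul_right, hiv, norm_smul, Real.norm_eq_abs, abs_of_pos hs,
        mul_pow, hnv, hγ] at h
      have h1 : ‖γ₀ + s • (c • w + b • γ₀)‖^2 = 1 := by rw [h, hbdef]; ring
      rw [← Real.sqrt_sq (norm_nonneg (γ₀ + s • (c • w + b • γ₀))), h1, Real.sqrt_one]
    · nlinarith [norm_nonneg (c • w + b • γ₀)]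
    · rw [dist_eq_norm]
      have heq : w - (c • w + b • γ₀) = (1 - c) • w + (-b) • γ₀ := by module
      rw [heq]
      have hb0 : b ≤ 0 := by rw [hbdef]; nlinarith [sq_nonneg r]
      calc ‖(1 - c) • w + (-b) • γ₀‖ ≤ ‖(1 - c) • w‖ + ‖(-b) • γ₀‖ := norm_add_le _ _
        _ = (1 - c) * r + (-b) := by
            rw [norm_smul, norm_smul, Real.norm_eq_abs, Real.norm_eq_abs,
              abs_of_nonneg (by linarith), abs_of_nonneg (by linarith), hγ, mul_one]
        _ ≤ (Δ^3 + Δ^2) * s := by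
            rw [hbdef]
            nlinarith [mul_le_mul_of_nonneg_right hc3 hr0,
              mul_le_mul_of_nonneg_right hsr (mul_nonneg hs.le (sq_nonneg r)),
              mul_le_mul_of_nonneg_left (mul_le_mul hw2 hw2 hr0 hΔ.le) hs.le,
              mul_nonneg hs.le (sq_nonneg r), sq_nonneg r]

/-- Lemma D.6: uniform Hausdorff convergence of the rescaled sphere neighborhoods
`V_t(γ₀) = {v : ‖γ₀ + √t·v‖ = 1, ‖v‖ ≤ Δ}` to the tangent disc
`V(γ₀) = {v : ⟨γ₀, v⟩ = 0, ‖v‖ ≤ Δ}`, uniformly over unit vectors `γ₀`, as `t_n → 0`. -/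
theorem sphere_tangent_set_hausdorff_convergence
    (k : ℕ) (hk : 1 ≤ k) (Δ : ℝ) (hΔ : 0 < Δ)
    (t : ℕ → ℝ) (ht : ∀ n, t n ∈ Set.Ioc (0 : ℝ) 1) (htlim : Tendsto t atTop (𝓝 0)) :
    Tendsto (fun n =>
        ⨆ γ₀ : {γ : EuclideanSpace ℝ (Fin k) // ‖γ‖ = 1},
          Metric.hausdorffDist
            {v : EuclideanSpace ℝ (Fin k) |
              ‖(γ₀ : EuclideanSpace ℝ (Fin k)) + Real.sqrt (t n) • v‖ = 1 ∧ ‖v‖ ≤ Δ}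
            {v : EuclideanSpace ℝ (Fin k) |
              inner ℝ (γ₀ : EuclideanSpace ℝ (Fin k)) v = (0 : ℝ) ∧ ‖v‖ ≤ Δ})
      atTop (𝓝 0) := by
  have hsqrt : Tendsto (fun n => Real.sqrt (t n)) atTop (𝓝 0) := by
    have := (Real.continuous_sqrt.tendsto 0).comp htlim
    simpa [Function.comp_def] using this
  have hupper : Tendsto (fun n => (Δ^3 + Δ^2) * Real.sqrt (t n)) atTop (𝓝 0) := by
    simpa using hsqrt.const_mul (Δ^3 + Δ^2)
  apply tendsto_of_tendsto_of_tendsto_of_le_of_le' tendsto_const_nhds hupper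
  · exact Eventually.of_forall fun n =>
      Real.iSup_nonneg fun γ₀ => Metric.hausdorffDist_nonneg
  · filter_upwards [htlim.eventually (gt_mem_nhds (show (0:ℝ) < Δ⁻¹^2 by positivity))]
      with n hn
    have hs0 : 0 < Real.sqrt (t n) := Real.sqrt_pos.mpr (ht n).1
    have hsΔ : Real.sqrt (t n) * Δ ≤ 1 := by
      have h1 : Real.sqrt (t n) ≤ Δ⁻¹ := by
        have := Real.sqrt_le_sqrt hn.le
        rwa [Real.sqrt_sq (by positivity)] at this
      calc Real.sqrt (t n) * Δ ≤ Δ⁻¹ * Δ := by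
            exact mul_le_mul_of_nonneg_right h1 hΔ.le
        _ = 1 := inv_mul_cancel₀ (ne_of_gt hΔ)
    exact Real.iSup_le
      (fun γ₀ => key_hausdorff Δ hΔ (γ₀ : EuclideanSpace ℝ (Fin k)) γ₀.2
        (Real.sqrt (t n)) hs0 hsΔ)
      (by positivity)
end

section
/- (Algebraic core of Lemma D.7, comparison with the Dovonon–Renault limit.) Let k ≥ 2, let γ₀ ∈ ℝ^k satisfy ∑_{j=1}^k γ₀^{(j)} ≠ 0, and let Δ₁, …, Δ_m be real symmetric k×k matrices with Δ_j γ₀ = 0 for every j. For g ∈ ℝ^m define f : ℝ^k → ℝ by f(v) = ∑_{j=1}^m g_j² + ∑_{j=1}^m g_j (vᵀΔ_j v) + (1/4) ∑_{j=1}^m (vᵀΔ_j v)². Then inf_{v ∈ ℝ^k} f(v) = inf { f(v) : v ∈ ℝ^k, ∑_{j=1}^k v^{(j)} = 0 }; that is, the unrestricted infimum of f equals its infimum over the hyperplane of vectors whose coordinates sum to zero. -/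
open Matrix

/-- Algebraic core of Lemma D.7: for symmetric matrices `Δⱼ` annihilating `γ₀` whose
coordinates do not sum to zero, the unrestricted infimum of
`f(v) = Σⱼ gⱼ² + Σⱼ gⱼ (vᵀΔⱼv) + (1/4) Σⱼ (vᵀΔⱼv)²` equals its infimum over the
hyperplane `{v : Σⱼ v⁽ʲ⁾ = 0}`. -/
theorem dovonon_renault_limit_comparison
    (k m : ℕ) (hk : 2 ≤ k)
    (γ₀ : Fin k → ℝ) (hγ₀ : (∑ j, γ₀ j) ≠ 0)
    (Δ : Fin m → Matrix (Fin k) (Fin k) ℝ) (hΔsymm : ∀ j, (Δ j).IsSymm)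
    (hker : ∀ j, (Δ j).mulVec γ₀ = 0)
    (g : Fin m → ℝ) :
    (⨅ v : Fin k → ℝ,
        (∑ j, (g j) ^ 2 + ∑ j, g j * (v ⬝ᵥ (Δ j).mulVec v)
          + (1 / 4) * ∑ j, (v ⬝ᵥ (Δ j).mulVec v) ^ 2)) =
    (⨅ v : {v : Fin k → ℝ // (∑ j, v j) = 0},
        (∑ j, (g j) ^ 2 + ∑ j, g j * ((v : Fin k → ℝ) ⬝ᵥ (Δ j).mulVec (v : Fin k → ℝ))
          + (1 / 4) * ∑ j, ((v : Fin k → ℝ) ⬝ᵥ (Δ j).mulVec (v : Fin k → ℝ)) ^ 2)) := by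
  set F : (Fin k → ℝ) → ℝ := fun v =>
    ∑ j, (g j) ^ 2 + ∑ j, g j * (v ⬝ᵥ (Δ j).mulVec v)
      + (1 / 4) * ∑ j, (v ⬝ᵥ (Δ j).mulVec v) ^ 2 with hF
  have hquad : ∀ (v : Fin k → ℝ) (a : ℝ) (j : Fin m),
      (v - a • γ₀) ⬝ᵥ (Δ j).mulVec (v - a • γ₀) = v ⬝ᵥ (Δ j).mulVec v := by
    intro v a j
    have h1 : (Δ j).mulVec (v - a • γ₀) = (Δ j).mulVec v := by
      rw [mulVec_sub, mulVec_smul, hker j, smul_zero, sub_zero]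
    rw [h1, sub_dotProduct, smul_dotProduct]
    have h2 : γ₀ ⬝ᵥ (Δ j).mulVec v = 0 := by
      rw [dotProduct_mulVec]
      have : γ₀ ᵥ* Δ j = (Δ j)ᵀ *ᵥ γ₀ := by rw [mulVec_transpose]
      rw [this, (hΔsymm j).eq, hker j, zero_dotProduct]
    rw [h2, smul_zero, sub_zero]
  have hFinv : ∀ (v : Fin k → ℝ) (a : ℝ), F (v - a • γ₀) = F v := by
    intro v a
    simp only [hF, hquad]
  have hrange : Set.range F =
      Set.range (fun v : {v : Fin k → ℝ // (∑ j, v j) = 0} => F (v : Fin k → ℝ)) := by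
    ext x
    constructor
    · rintro ⟨v, rfl⟩
      set a : ℝ := (∑ j, v j) / (∑ j, γ₀ j) with ha
      have hsum : (∑ j, (v - a • γ₀) j) = 0 := by
        simp only [Pi.sub_apply, Pi.smul_apply, smul_eq_mul, Finset.sum_sub_distrib,
          ← Finset.mul_sum, ha]
        field_simp
        ring
      exact ⟨⟨v - a • γ₀, hsum⟩, hFinv v a⟩
    · rintro ⟨⟨v, hv⟩, rfl⟩
      exact ⟨v, rfl⟩
  show ⨅ v, F v = ⨅ v : {v : Fin k → ℝ // (∑ j, v j) = 0}, F (v : Fin k → ℝ)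
  rw [iInf, iInf, hrange]
end

section
/- (Extended continuous mapping theorem for convergence in probability; Lemma B.3 with nonrandom maps g_n.) Let (Ω, 𝒜, μ) be a probability space, let (D, d) and (E, ρ) be metric spaces, let D₀ ⊆ D, and let g : D₀ → E. For each n let g_n : D → E be a (nonrandom) function such that g_n(x_n) → g(x) whenever x_n ∈ D, x ∈ D₀ and x_n → x. Let X_n : Ω → D and X : Ω → D be Borel measurable with separable range, with X(ω) ∈ D₀ for μ-almost every ω, and suppose X_n → X in measure, i.e., for every ε > 0, μ{ω : d(X_n(ω), X(ω)) ≥ ε} → 0. Then g_n(X_n) → g(X) in measure: for every ε > 0, μ{ω : ρ(g_n(X_n(ω)), g(X(ω))) ≥ ε} → 0. -/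
open Filter Topology MeasureTheory

lemma key_subseq_tendsto {D E : Type*} [MetricSpace D] [MetricSpace E]
    (D₀ : Set D) (g : D → E) (gn : ℕ → D → E)
    (hg : ∀ (xn : ℕ → D) (x : D), x ∈ D₀ → Tendsto xn atTop (𝓝 x) →
      Tendsto (fun n => gn n (xn n)) atTop (𝓝 (g x)))
    {x : D} (hx : x ∈ D₀) {nk : ℕ → ℕ} (hnk : Tendsto nk atTop atTop)
    {w : ℕ → D} (hw : Tendsto w atTop (𝓝 x)) :
    Tendsto (fun k => gn (nk k) (w k)) atTop (𝓝 (g x)) := by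
  classical
  rw [Metric.tendsto_atTop]
  by_contra hcon
  push_neg at hcon
  obtain ⟨δ, hδ, hfreq⟩ := hcon
  have h' : ∀ N M : ℕ, ∃ n, N ≤ n ∧ M ≤ nk n ∧ δ ≤ dist (gn (nk n) (w n)) (g x) := by
    intro N M
    obtain ⟨K, hK⟩ := (tendsto_atTop_atTop.mp hnk) M
    obtain ⟨n, hn1, hn2⟩ := hfreq (max N K)
    exact ⟨n, le_trans (le_max_left _ _) hn1, hK n (le_trans (le_max_right _ _) hn1),
      hn2⟩
  choose F h1 h2 h3 using h'
  let ψ : ℕ → ℕ := fun i => Nat.rec (F 0 0) (fun _ p => F (p + 1) (nk p + 1)) i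
  have hψsucc : ∀ i, ψ (i + 1) = F (ψ i + 1) (nk (ψ i) + 1) := fun i => rfl
  have hψmono : StrictMono ψ := strictMono_nat_of_lt_succ (fun i => by
    rw [hψsucc]; exact lt_of_lt_of_le (Nat.lt_succ_self _) (h1 _ _))
  have hnkmono : StrictMono (fun i => nk (ψ i)) := strictMono_nat_of_lt_succ (fun i => by
    rw [hψsucc]; exact lt_of_lt_of_le (Nat.lt_succ_self _) (h2 _ _))
  have hdist : ∀ i, δ ≤ dist (gn (nk (ψ i)) (w (ψ i))) (g x) := by
    intro i
    cases i with
    | zero => exact h3 0 0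
    | succ i => rw [hψsucc]; exact h3 _ _
  set xn : ℕ → D := fun n => if h : ∃ i, nk (ψ i) = n then w (ψ (h.choose)) else x with hxn
  have hxval : ∀ i, xn (nk (ψ i)) = w (ψ i) := by
    intro i
    have h : ∃ j, nk (ψ j) = nk (ψ i) := ⟨i, rfl⟩
    have hci : h.choose = i := hnkmono.injective (h.choose_spec)
    simp only [hxn, dif_pos h, hci]
  have hxtend : Tendsto xn atTop (𝓝 x) := by
    rw [Metric.tendsto_atTop]
    intro r hr
    obtain ⟨K, hK⟩ := Metric.tendsto_atTop.mp hw r hr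
    refine ⟨nk (ψ K) + 1, fun n hn => ?_⟩
    by_cases h : ∃ i, nk (ψ i) = n
    · have hch := h.choose_spec
      have hKc : K < h.choose := by
        by_contra hle
        push_neg at hle
        have := hnkmono.monotone hle
        omega
      simp only [hxn, dif_pos h]
      exact hK _ (le_trans hKc.le (hψmono.le_apply))
    · simp only [hxn, dif_neg h, dist_self]; exact hr
  have hmain := (hg xn x hx hxtend).comp (hnkmono.tendsto_atTop)
  rw [Metric.tendsto_atTop] at hmain
  obtain ⟨N, hNd⟩ := hmain δ hδ
  have hlt := hNd N le_rfl
  simp only [Function.comp] at hlt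
  rw [hxval N] at hlt
  exact absurd hlt (not_lt.mpr (hdist N))


/-- Extended continuous mapping theorem for convergence in probability (Lemma B.3 with
nonrandom maps `g_n`): if `g_n(x_n) → g(x)` whenever `x_n → x ∈ D₀`, and `X_n → X` in
measure with `X ∈ D₀` almost everywhere, where `X_n, X` are Borel measurable with
separable range, then `g_n(X_n) → g(X)` in measure. -/
theorem extended_cmt_in_measure
    {Ω : Type*} [MeasurableSpace Ω] (μ : Measure Ω) [IsProbabilityMeasure μ]
    {D E : Type*} [MetricSpace D] [MetricSpace E] [MeasurableSpace D] [BorelSpace D]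
    (D₀ : Set D) (g : D → E) (gn : ℕ → D → E)
    (hg : ∀ (xn : ℕ → D) (x : D), x ∈ D₀ → Tendsto xn atTop (𝓝 x) →
      Tendsto (fun n => gn n (xn n)) atTop (𝓝 (g x)))
    (Xn : ℕ → Ω → D) (X : Ω → D)
    (hXnm : ∀ n, Measurable (Xn n)) (hXm : Measurable X)
    (hXnsep : ∀ n, TopologicalSpace.IsSeparable (Set.range (Xn n)))
    (hXsep : TopologicalSpace.IsSeparable (Set.range X))
    (hX₀ : ∀ᵐ ω ∂μ, X ω ∈ D₀)
    (hconv : TendstoInMeasure μ Xn atTop X) :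
    TendstoInMeasure μ (fun n ω => gn n (Xn n ω)) atTop (fun ω => g (X ω)) := by
  classical
  rw [tendstoInMeasure_iff_dist] at hconv ⊢
  intro ε hε
  set A : ℕ → Set D := fun k =>
    {x | ∃ n, k ≤ n ∧ ∃ y z, dist y x < 1 / (k + 1) ∧ dist z x < 1 / (k + 1) ∧ z ∈ D₀ ∧
      ε ≤ dist (gn n y) (g z)} with hA
  have hAopen : ∀ k, IsOpen (A k) := by
    intro k
    rw [Metric.isOpen_iff]
    rintro x ⟨n, hkn, y, z, hy, hz, hzD, hd⟩
    have hry : (0:ℝ) < 1 / (k + 1) - dist y x := by linarith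
    have hrz : (0:ℝ) < 1 / (k + 1) - dist z x := by linarith
    refine ⟨min (1 / (k + 1) - dist y x) (1 / (k + 1) - dist z x), lt_min hry hrz, ?_⟩
    intro x' hx'
    rw [Metric.mem_ball] at hx'
    have h1 : dist x' x < 1 / (k + 1) - dist y x := lt_of_lt_of_le hx' (min_le_left _ _)
    have h2 : dist x' x < 1 / (k + 1) - dist z x := lt_of_lt_of_le hx' (min_le_right _ _)
    have ty : dist y x' ≤ dist y x + dist x x' := dist_triangle y x x'
    have tz : dist z x' ≤ dist z x + dist x x' := dist_triangle z x x'
    have tc : dist x x' = dist x' x := dist_comm x x'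
    exact ⟨n, hkn, y, z, by linarith, by linarith, hzD, hd⟩
  have hAanti : Antitone A := by
    intro k k' hkk'
    rintro x ⟨n, hkn, y, z, hy, hz, hzD, hd⟩
    have hinv : (1:ℝ) / (k' + 1) ≤ 1 / (k + 1) := by
      apply one_div_le_one_div_of_le
      · positivity
      · have : (k:ℝ) ≤ k' := Nat.cast_le.mpr hkk'
        linarith
    exact ⟨n, le_trans hkk' hkn, y, z, lt_of_lt_of_le hy hinv, lt_of_lt_of_le hz hinv, hzD, hd⟩
  have hAmeas : ∀ k, MeasurableSet (X ⁻¹' A k) := fun k => hXm (hAopen k).measurableSet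
  have hNnull : μ {ω | X ω ∉ D₀} = 0 := ae_iff.mp hX₀
  -- the intersection of the A k is disjoint from D₀
  have hInter : ∀ x ∈ D₀, x ∈ (⋂ k, A k) → False := by
    intro x hx hxA
    simp only [Set.mem_iInter] at hxA
    choose nk hnk y z hy hz hzD hd using hxA
    have hinvk : Tendsto (fun k : ℕ => 1 / ((k:ℝ) + 1)) atTop (𝓝 0) :=
      tendsto_one_div_add_atTop_nhds_zero_nat
    have hytend : Tendsto y atTop (𝓝 x) := by
      rw [tendsto_iff_dist_tendsto_zero]
      exact squeeze_zero (fun k => dist_nonneg) (fun k => (hy k).le) hinvk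
    have hztend : Tendsto z atTop (𝓝 x) := by
      rw [tendsto_iff_dist_tendsto_zero]
      exact squeeze_zero (fun k => dist_nonneg) (fun k => (hz k).le) hinvk
    have hnktend : Tendsto nk atTop atTop :=
      tendsto_atTop_mono hnk tendsto_id
    have hY : Tendsto (fun k => gn (nk k) (y k)) atTop (𝓝 (g x)) :=
      key_subseq_tendsto D₀ g gn hg hx hnktend hytend
    -- choose m k approximating g (z k)
    have hm' : ∀ k : ℕ, ∃ m, k ≤ m ∧ dist (gn m (z k)) (g (z k)) < 1 / (k + 1) := by
      intro k
      have hc := hg (fun _ => z k) (z k) (hzD k) tendsto_const_nhds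
      rw [Metric.tendsto_atTop] at hc
      obtain ⟨N, hN⟩ := hc (1 / (k + 1)) (by positivity)
      exact ⟨max k N, le_max_left _ _, hN _ (le_max_right _ _)⟩
    choose m hm1 hm2 using hm'
    have hmtend : Tendsto m atTop atTop := tendsto_atTop_mono hm1 tendsto_id
    have hZ : Tendsto (fun k => gn (m k) (z k)) atTop (𝓝 (g x)) :=
      key_subseq_tendsto D₀ g gn hg hx hmtend hztend
    have hgz : Tendsto (fun k => g (z k)) atTop (𝓝 (g x)) := by
      rw [tendsto_iff_dist_tendsto_zero]
      have hb : ∀ k, dist (g (z k)) (g x) ≤ 1 / (k + 1) + dist (gn (m k) (z k)) (g x) := by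
        intro k
        calc dist (g (z k)) (g x) ≤ dist (g (z k)) (gn (m k) (z k)) + dist (gn (m k) (z k)) (g x) :=
              dist_triangle _ _ _
          _ ≤ 1 / (k + 1) + dist (gn (m k) (z k)) (g x) := by
              have := hm2 k
              rw [dist_comm]
              linarith
      have hlim : Tendsto (fun k : ℕ => 1 / ((k:ℝ) + 1) + dist (gn (m k) (z k)) (g x)) atTop
          (𝓝 0) := by
        have := hinvk.add (tendsto_iff_dist_tendsto_zero.mp hZ)
        simpa using this
      exact squeeze_zero (fun k => dist_nonneg) hb hlim
    have hdd : Tendsto (fun k => dist (gn (nk k) (y k)) (g (z k))) atTop (𝓝 (dist (g x) (g x))) :=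
      hY.dist hgz
    rw [dist_self] at hdd
    have hev := (hdd.eventually (eventually_lt_nhds hε)) -- eventually dist < ε
    obtain ⟨k, hk⟩ := hev.exists
    exact absurd (hd k) (not_le.mpr hk)
  -- continuity from above
  have hIter : Tendsto (fun k => μ (X ⁻¹' A k)) atTop (𝓝 0) := by
    have ht := tendsto_measure_iInter_atTop (μ := μ)
      (fun k => (hAmeas k).nullMeasurableSet)
      (fun k k' hkk' => Set.preimage_mono (hAanti hkk')) ⟨0, measure_ne_top μ _⟩
    have h0 : μ (⋂ k, X ⁻¹' A k) = 0 := by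
      apply measure_mono_null _ hNnull
      intro ω hω
      simp only [Set.mem_iInter, Set.mem_preimage] at hω
      intro hD₀
      exact hInter (X ω) hD₀ (Set.mem_iInter.mpr hω)
    rw [h0] at ht
    exact ht
  rw [ENNReal.tendsto_atTop_zero]
  intro δ hδ
  have hδ2 : 0 < δ / 2 := ENNReal.half_pos hδ.ne'
  obtain ⟨k, hk⟩ := (ENNReal.tendsto_atTop_zero.mp hIter) (δ / 2) hδ2
  have h1k : (0:ℝ) < 1 / (k + 1) := by positivity
  obtain ⟨N₁, hN₁⟩ := (ENNReal.tendsto_atTop_zero.mp (hconv (1 / (k + 1)) h1k)) (δ / 2) hδ2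
  refine ⟨max k N₁, fun n hn => ?_⟩
  have hkn : k ≤ n := le_trans (le_max_left _ _) hn
  have hN₁n : N₁ ≤ n := le_trans (le_max_right _ _) hn
  have hsub : {ω | ε ≤ dist (gn n (Xn n ω)) (g (X ω))} ⊆
      {ω | 1 / (k + 1) ≤ dist (Xn n ω) (X ω)} ∪ (X ⁻¹' A k ∪ {ω | X ω ∉ D₀}) := by
    intro ω hω
    by_cases h1 : 1 / ((k:ℝ) + 1) ≤ dist (Xn n ω) (X ω)
    · exact Or.inl h1
    by_cases h2 : X ω ∈ D₀
    · refine Or.inr (Or.inl ?_)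
      exact ⟨n, hkn, Xn n ω, X ω, not_le.mp h1, by simpa [dist_self] using h1k, h2, hω⟩
    · exact Or.inr (Or.inr h2)
  calc μ {ω | ε ≤ dist (gn n (Xn n ω)) (g (X ω))}
      ≤ μ ({ω | 1 / (k + 1) ≤ dist (Xn n ω) (X ω)} ∪ (X ⁻¹' A k ∪ {ω | X ω ∉ D₀})) :=
        measure_mono hsub
    _ ≤ μ {ω | 1 / (k + 1) ≤ dist (Xn n ω) (X ω)} + (μ (X ⁻¹' A k) + μ {ω | X ω ∉ D₀}) :=
        le_trans (measure_union_le _ _) (by gcongr; exact measure_union_le _ _)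
    _ ≤ δ / 2 + (δ / 2 + 0) := by
        gcongr
        · exact hN₁ n hN₁n
        · exact hk k le_rfl
        · exact hNnull.le
    _ = δ := by rw [add_zero, ENNReal.add_halves]
end

section
/- (Continuity of the second order Hadamard directional derivative.) Let D and E be normed spaces, D₀ ⊆ D, θ ∈ D, and let φ : D → E, φ′ : D → E, φ″ : D₀ → E be maps with φ′ continuous. Suppose that for every sequence (t_n) with t_n ↓ 0 and every sequence (h_n) ⊂ D with h_n → h ∈ D₀, one has (φ(θ + t_n h_n) − φ(θ) − t_n φ′(h_n))/t_n² → φ″(h) in E. Then φ″ is continuous on D₀: for every sequence (h_m) ⊂ D₀ and h ∈ D₀ with h_m → h, φ″(h_m) → φ″(h). -/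
open Filter Topology

/-- Continuity of the second order Hadamard directional derivative: if `φ` is second
order Hadamard directionally differentiable at `θ` tangentially to `D₀` with continuous
first order derivative `φ′` and second order derivative `φ″`, then `φ″` is (sequentially)
continuous on `D₀`. -/
theorem second_order_derivative_continuous
    {D E : Type*} [NormedAddCommGroup D] [NormedSpace ℝ D]
    [NormedAddCommGroup E] [NormedSpace ℝ E]
    (D₀ : Set D) (θ : D) (φ φ' φ'' : D → E) (hφ' : Continuous φ')
    (hdiff : ∀ t : ℕ → ℝ, (∀ n, 0 < t n) → Tendsto t atTop (𝓝 0) →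
      ∀ (hn : ℕ → D) (h : D), h ∈ D₀ → Tendsto hn atTop (𝓝 h) →
      Tendsto (fun n => ((t n) ^ 2)⁻¹ • (φ (θ + t n • hn n) - φ θ - t n • φ' (hn n)))
        atTop (𝓝 (φ'' h))) :
    ∀ (hm : ℕ → D) (h : D), (∀ i, hm i ∈ D₀) → h ∈ D₀ → Tendsto hm atTop (𝓝 h) →
      Tendsto (fun i => φ'' (hm i)) atTop (𝓝 (φ'' h)) := by
  intro hm h hmem hD0 hlim
  set Q : ℝ → D → E := fun t x => (t ^ 2)⁻¹ • (φ (θ + t • x) - φ θ - t • φ' x) with hQ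
  have hone : Tendsto (fun n : ℕ => (1 : ℝ) / (n + 1)) atTop (𝓝 0) :=
    tendsto_one_div_add_atTop_nhds_zero_nat
  -- Step 1: diagonal choice of t m
  have key : ∀ m : ℕ, ∃ t : ℝ, 0 < t ∧ t ≤ 1 / (m + 1) ∧
      ‖Q t (hm m) - φ'' (hm m)‖ < 1 / (m + 1) := by
    intro m
    have h2 := hdiff (fun n : ℕ => 1 / (n + 1)) (fun n => by positivity) hone
      (fun _ => hm m) (hm m) (hmem m) tendsto_const_nhds
    rw [Metric.tendsto_atTop] at h2
    obtain ⟨N, hN⟩ := h2 (1 / (m + 1)) (by positivity)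
    refine ⟨1 / ((max N m : ℕ) + 1), by positivity, ?_, ?_⟩
    · apply one_div_le_one_div_of_le (by positivity)
      have : (m : ℝ) ≤ (max N m : ℕ) := Nat.cast_le.mpr (le_max_right N m)
      linarith
    · have := hN (max N m) (le_max_left N m)
      rwa [dist_eq_norm] at this
  choose t ht1 ht2 ht3 using key
  have htend : Tendsto t atTop (𝓝 0) :=
    squeeze_zero (fun m => (ht1 m).le) ht2 hone
  have hmain : Tendsto (fun m => Q (t m) (hm m)) atTop (𝓝 (φ'' h)) :=
    hdiff t ht1 htend hm h hD0 hlim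
  have hdiff0 : Tendsto (fun m => Q (t m) (hm m) - φ'' (hm m)) atTop (𝓝 0) :=
    squeeze_zero_norm (fun m => (ht3 m).le) hone
  have := hmain.sub hdiff0
  simpa using this
end
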